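/- arXiv:1611.06346 — 8 statements merged into one kernel-verified Lean document; each statement's English description precedes it below -/
import Mathlib

section
/- The quasi-Poincaré compactification T is a bijection from ℝⁿ onto the disk D = {x ∈ ℝⁿ : p(x) < 1}. -/
open Finset


/-- The quasi-Poincaré functional `p(y) = (∑_{i∈I} aᵢ yᵢ^{2βᵢ})^{1/(2c)}`,
where `I = {i : 0 < αᵢ}`. -/
noncomputable def pF {n : ℕ} (α β : Fin n → ℕ) (a : Fin n → ℝ) (c : ℕ)
    (y : Fin n → ℝ) : ℝ :=
  (∑ i ∈ univ.filter (fun i => 0 < α i), a i * y i ^ (2 * β i)) ^ ((1 : ℝ) / (2 * (c : ℝ)))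

/-- The quasi-Poincaré functional `κ(y) = (1 + p(y)^{2c})^{1/(2c)}`. -/
noncomputable def kF {n : ℕ} (α β : Fin n → ℕ) (a : Fin n → ℝ) (c : ℕ)
    (y : Fin n → ℝ) : ℝ :=
  (1 + pF α β a c y ^ (2 * c)) ^ ((1 : ℝ) / (2 * (c : ℝ)))

/-- The quasi-Poincaré compactification `T(y)ᵢ = yᵢ / κ(y)^{αᵢ}`. -/
noncomputable def TqP {n : ℕ} (α β : Fin n → ℕ) (a : Fin n → ℝ) (c : ℕ)
    (y : Fin n → ℝ) : Fin n → ℝ :=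
  fun i => y i / (kF α β a c y) ^ (α i)


noncomputable def Qs {n : ℕ} (α β : Fin n → ℕ) (a : Fin n → ℝ)
    (y : Fin n → ℝ) : ℝ :=
  ∑ i ∈ univ.filter (fun i => 0 < α i), a i * y i ^ (2 * β i)

lemma Qs_nonneg {n : ℕ} (α β : Fin n → ℕ) (a : Fin n → ℝ)
    (ha : ∀ i, 1 ≤ a i) (y : Fin n → ℝ) : 0 ≤ Qs α β a y := by
  refine Finset.sum_nonneg fun i _ => mul_nonneg (le_trans zero_le_one (ha i)) ?_
  exact (even_two_mul (β i)).pow_nonneg _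

lemma rpow_inv_natpow {c : ℕ} (hc : 0 < c) {s : ℝ} (hs : 0 ≤ s) :
    (s ^ ((1:ℝ)/(2*(c:ℝ)))) ^ (2*c) = s := by
  rw [← Real.rpow_natCast _ (2*c), ← Real.rpow_mul hs]
  push_cast
  rw [one_div, inv_mul_cancel₀ (by positivity : (0:ℝ) < 2*(c:ℝ)).ne', Real.rpow_one]

lemma pF_pow {n : ℕ} (α β : Fin n → ℕ) (a : Fin n → ℝ) {c : ℕ} (hc : 0 < c)
    (ha : ∀ i, 1 ≤ a i) (y : Fin n → ℝ) :
    pF α β a c y ^ (2*c) = Qs α β a y :=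
  rpow_inv_natpow hc (Qs_nonneg α β a ha y)

lemma pF_nonneg {n : ℕ} (α β : Fin n → ℕ) (a : Fin n → ℝ) (c : ℕ)
    (ha : ∀ i, 1 ≤ a i) (y : Fin n → ℝ) : 0 ≤ pF α β a c y :=
  Real.rpow_nonneg (Qs_nonneg α β a ha y) _

lemma kF_pow {n : ℕ} (α β : Fin n → ℕ) (a : Fin n → ℝ) {c : ℕ} (hc : 0 < c)
    (ha : ∀ i, 1 ≤ a i) (y : Fin n → ℝ) :
    kF α β a c y ^ (2*c) = 1 + Qs α β a y := by
  have h0 : (0:ℝ) ≤ 1 + pF α β a c y ^ (2*c) := by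
    have := pF_nonneg α β a c ha y; positivity
  rw [kF, rpow_inv_natpow hc h0, pF_pow α β a hc ha]

lemma kF_pos {n : ℕ} (α β : Fin n → ℕ) (a : Fin n → ℝ) {c : ℕ} (hc : 0 < c)
    (ha : ∀ i, 1 ≤ a i) (y : Fin n → ℝ) : 0 < kF α β a c y := by
  apply Real.rpow_pos_of_pos
  have := pF_nonneg α β a c ha y
  positivity

lemma Qs_scale {n : ℕ} (α β : Fin n → ℕ) (a : Fin n → ℝ) {c : ℕ}
    (hαβ : ∀ i, 0 < α i → α i * β i = c) {t : ℝ} (ht : t ≠ 0) (y : Fin n → ℝ) :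
    Qs α β a (fun i => y i / t ^ α i) = Qs α β a y / t ^ (2*c) := by
  rw [Qs, Qs, Finset.sum_div]
  refine Finset.sum_congr rfl fun i hi => ?_
  have hi' : 0 < α i := (Finset.mem_filter.1 hi).2
  rw [mul_div_assoc, div_pow, ← pow_mul]
  congr 2
  rw [← hαβ i hi']; ring

lemma pow_left_inj' {c : ℕ} (hc : 0 < c) {u v : ℝ} (hu : 0 ≤ u) (hv : 0 ≤ v)
    (h : u ^ (2*c) = v ^ (2*c)) : u = v := by
  have h2c : 2*c ≠ 0 := by omega
  exact (pow_left_inj₀ hu hv h2c).1 h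


/-- The quasi-Poincaré compactification `T` is a bijection from `ℝⁿ` onto the
disk `D = {x : p(x) < 1}`. -/
theorem quasiPoincare_bijOn
    {n : ℕ} (hn : 1 ≤ n) (α β : Fin n → ℕ) (a : Fin n → ℝ) (c : ℕ)
    (hα : ∃ i, 0 < α i) (hc : 0 < c)
    (hαβ : ∀ i, 0 < α i → α i * β i = c)
    (hβ0 : ∀ i, α i = 0 → β i = 0)
    (ha : ∀ i, 1 ≤ a i) :
    Set.BijOn (TqP α β a c) Set.univ {x : Fin n → ℝ | pF α β a c x < 1} := by
  have h2c : 2 * c ≠ 0 := by omega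
  have hQ0 : ∀ y, 0 ≤ Qs α β a y := Qs_nonneg α β a ha
  have hk0 : ∀ y, 0 < kF α β a c y := kF_pos α β a hc ha
  have hkpow : ∀ y, kF α β a c y ^ (2*c) = 1 + Qs α β a y := kF_pow α β a hc ha
  have hp_lt : ∀ y, pF α β a c y < 1 ↔ Qs α β a y < 1 := by
    intro y
    rw [← (pow_left_strictMonoOn₀ h2c).lt_iff_lt
        (Set.mem_setOf_eq ▸ pF_nonneg α β a c ha y) (Set.mem_setOf_eq ▸ zero_le_one),
      pF_pow α β a hc ha, one_pow]
  have hQT : ∀ y, Qs α β a (TqP α β a c y) = Qs α β a y / (1 + Qs α β a y) := by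
    intro y
    rw [show TqP α β a c y = (fun i => y i / kF α β a c y ^ α i) from rfl,
      Qs_scale α β a hαβ (hk0 y).ne' y, hkpow]
  refine ⟨fun y _ => ?_, fun y _ y' _ h => ?_, fun x hx => ?_⟩
  · simp only [Set.mem_setOf_eq]
    rw [hp_lt, hQT, div_lt_one (by have := hQ0 y; linarith)]
    linarith [hQ0 y]
  · have hQeq : Qs α β a y = Qs α β a y' := by
      have h1 := hQT y
      rw [h, hQT y'] at h1
      rw [div_eq_div_iff (ne_of_gt (by have := hQ0 y'; linarith)) (ne_of_gt (by have := hQ0 y; linarith))] at h1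
      nlinarith [hQ0 y, hQ0 y']
    have hkeq : kF α β a c y = kF α β a c y' :=
      pow_left_inj' hc (hk0 y).le (hk0 y').le (by rw [hkpow, hkpow, hQeq])
    funext i
    have hi := congrFun h i
    simp only [TqP, hkeq] at hi
    have hne : kF α β a c y' ^ α i ≠ 0 := pow_ne_zero _ (hk0 y').ne'
    field_simp at hi
    exact hi
  · simp only [Set.mem_setOf_eq] at hx
    have hQx : Qs α β a x < 1 := (hp_lt x).1 hx
    have h1Q : 0 < 1 - Qs α β a x := by linarith
    set t := (1 - Qs α β a x) ^ ((1:ℝ)/(2*(c:ℝ))) with ht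
    have ht0 : 0 < t := Real.rpow_pos_of_pos h1Q _
    have htpow : t ^ (2*c) = 1 - Qs α β a x := rpow_inv_natpow hc h1Q.le
    set y := fun i => x i / t ^ α i with hy
    have hQy : Qs α β a y = Qs α β a x / (1 - Qs α β a x) := by
      rw [hy, Qs_scale α β a hαβ ht0.ne' x, htpow]
    have hky : kF α β a c y = t⁻¹ := by
      apply pow_left_inj' hc (hk0 y).le (by positivity)
      rw [hkpow, hQy, inv_pow, htpow]
      field_simp
      ring
    refine ⟨y, Set.mem_univ y, ?_⟩
    funext i
    simp only [TqP, hky]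
    simp only [hy]
    have hne : t ^ α i ≠ 0 := pow_ne_zero _ ht0.ne'
    field_simp
    rw [mul_assoc, ← mul_pow, mul_one_div_cancel ht0.ne', one_pow, mul_one]
end

section
/- For every y ∈ ℝⁿ and every vector v ∈ ℝⁿ, one has v − κ(y)^{−1} (∑_{i=1}^{n} ∂κ/∂yᵢ(y) · vᵢ) · (α₁y₁,…,αₙyₙ) = 0 if and only if v = 0. Consequently, for any map f : ℝⁿ → ℝⁿ, a point y ∈ ℝⁿ is an equilibrium of y' = f(y) (i.e. f(y) = 0) if and only if the compactified vector field f(y) − κ(y)^{−1}⟨∇κ(y), f(y)⟩ (α₁y₁,…,αₙyₙ) vanishes at y. -/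
open Finset

/-- For every `y` and `v`, `v − κ(y)⁻¹ ⟨∇κ(y), v⟩ (α₁y₁,…,αₙyₙ) = 0 ↔ v = 0`.
Consequently, `y` is an equilibrium of `y' = f(y)` iff the compactified vector
field `f(y) − κ(y)⁻¹⟨∇κ(y), f(y)⟩ (α₁y₁,…,αₙyₙ)` vanishes at `y`. -/
theorem compactified_equilibria_correspondence
    {n : ℕ} (hn : 1 ≤ n) (α β : Fin n → ℕ) (a : Fin n → ℝ) (c : ℕ)
    (hα : ∃ i, 0 < α i) (hc : 0 < c)
    (hαβ : ∀ i, 0 < α i → α i * β i = c)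
    (hβ0 : ∀ i, α i = 0 → β i = 0)
    (ha : ∀ i, 1 ≤ a i) :
    (∀ (y v : Fin n → ℝ),
      (fun i => v i - (kF α β a c y)⁻¹ *
          (∑ j, fderiv ℝ (kF α β a c) y (Pi.single j 1) * v j) * ((α i : ℝ) * y i))
        = 0 ↔ v = 0) ∧
    (∀ (f : (Fin n → ℝ) → (Fin n → ℝ)) (y : Fin n → ℝ),
      f y = 0 ↔
      (fun i => f y i - (kF α β a c y)⁻¹ *
          (∑ j, fderiv ℝ (kF α β a c) y (Pi.single j 1) * f y j) * ((α i : ℝ) * y i))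
        = 0) := by
  classical
  set I := univ.filter (fun i : Fin n => 0 < α i) with hIdef
  set r : ℝ := (1 : ℝ) / (2 * (c : ℝ)) with hrdef
  have hc2 : (2 * (c : ℝ)) ≠ 0 := by positivity
  have hr2c : r * (2 * (c : ℝ)) = 1 := by rw [hrdef, one_div, inv_mul_cancel₀ hc2]
  -- rewrite kF as a clean rpow
  have hkF : kF α β a c = fun z : Fin n → ℝ =>
      (1 + ∑ i ∈ I, a i * z i ^ (2 * β i)) ^ r := by
    funext z
    have hz : (0 : ℝ) ≤ ∑ i ∈ I, a i * z i ^ (2 * β i) :=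
      Finset.sum_nonneg fun i _ => mul_nonneg (le_trans zero_le_one (ha i))
        ((even_two_mul (β i)).pow_nonneg _)
    unfold kF pF
    congr 1
    rw [← Real.rpow_natCast ((∑ i ∈ I, a i * z i ^ (2 * β i)) ^ r) (2 * c),
      ← Real.rpow_mul hz]
    push_cast
    rw [hr2c, Real.rpow_one]
  have key : ∀ (y v : Fin n → ℝ),
      (fun i => v i - (kF α β a c y)⁻¹ *
          (∑ j, fderiv ℝ (kF α β a c) y (Pi.single j 1) * v j) * ((α i : ℝ) * y i))
        = 0 ↔ v = 0 := by
    intro y v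
    set T := ∑ i ∈ I, a i * y i ^ (2 * β i) with hTdef
    have hTnn : (0 : ℝ) ≤ T :=
      Finset.sum_nonneg fun i _ => mul_nonneg (le_trans zero_le_one (ha i))
        ((even_two_mul (β i)).pow_nonneg _)
    have hS : (0 : ℝ) < 1 + T := by linarith
    set L : (Fin n → ℝ) →L[ℝ] ℝ :=
      ∑ i ∈ I, (a i * ((2 * β i : ℕ) : ℝ) * y i ^ (2 * β i - 1)) •
        (ContinuousLinearMap.proj i : (Fin n → ℝ) →L[ℝ] ℝ) with hLdef
    have hS' : HasFDerivAt (fun z : Fin n → ℝ =>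
        1 + ∑ i ∈ I, a i * z i ^ (2 * β i)) L y := by
      refine HasFDerivAt.const_add 1 ?_
      rw [hLdef]
      refine HasFDerivAt.fun_sum fun i _ => ?_
      have hproj : HasFDerivAt (fun z : Fin n → ℝ => z i)
          (ContinuousLinearMap.proj i : (Fin n → ℝ) →L[ℝ] ℝ) y := by
        exact hasFDerivAt_apply i y
      have hp := (hasDerivAt_pow (2 * β i) (y i)).comp_hasFDerivAt y hproj
      have := hp.const_mul (a i)
      refine this.congr_fderiv ?_
      rw [smul_smul]
      ring_nf
    have hκ : HasFDerivAt (kF α β a c) ((r * (1 + T) ^ (r - 1)) • L) y := by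
      rw [hkF]
      exact HasFDerivAt.rpow_const hS' (Or.inl hS.ne')
    have hfd := hκ.fderiv
    -- linearity in v
    have happ : ∀ w : Fin n → ℝ,
        ∑ j, fderiv ℝ (kF α β a c) y (Pi.single j 1) * w j =
        fderiv ℝ (kF α β a c) y w := by
      intro w
      have hw : w = ∑ j, w j • (Pi.single j 1 : Fin n → ℝ) := by
        funext i
        simp [Pi.single_apply, Finset.sum_apply, mul_comm]
      conv_rhs => rw [hw, map_sum]
      refine Finset.sum_congr rfl fun j _ => ?_
      rw [map_smul]
      simp [mul_comm]
    -- value on w = α * y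
    have hαβR : ∀ i ∈ I, ((α i : ℝ)) * (β i : ℝ) = (c : ℝ) := by
      intro i hi
      rw [hIdef] at hi
      simp only [mem_filter] at hi
      exact_mod_cast congrArg (Nat.cast : ℕ → ℝ) (hαβ i hi.2)
    have hLw : L (fun i => (α i : ℝ) * y i) = 2 * (c : ℝ) * T := by
      rw [hLdef]
      simp only [ContinuousLinearMap.coe_sum', Finset.sum_apply,
        ContinuousLinearMap.smul_apply, ContinuousLinearMap.proj_apply,
        smul_eq_mul]
      rw [hTdef, Finset.mul_sum]
      refine Finset.sum_congr rfl fun i hi => ?_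
      have hiα : 0 < α i := by
        rw [hIdef] at hi
        simp only [mem_filter] at hi
        exact hi.2
      have hβi : 1 ≤ β i := by
        rcases Nat.eq_zero_or_pos (β i) with h0 | h1
        · exfalso
          have h2 := hαβ i hiα
          rw [h0, Nat.mul_zero] at h2
          omega
        · exact h1
      have hpow : y i ^ (2 * β i - 1) * y i = y i ^ (2 * β i) := by
        rw [← pow_succ, Nat.sub_add_cancel (by omega)]
      have hci := hαβR i hi
      have : a i * ((2 * β i : ℕ) : ℝ) * y i ^ (2 * β i - 1) * ((α i : ℝ) * y i)
          = 2 * ((α i : ℝ) * (β i : ℝ)) * (a i * (y i ^ (2 * β i - 1) * y i)) := by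
        push_cast
        ring
      rw [this, hpow, hci]
    have hκy : kF α β a c y = (1 + T) ^ r := by rw [hkF]
    have hκpos : (0 : ℝ) < (1 + T) ^ r := Real.rpow_pos_of_pos hS r
    -- the key scalar value
    have hval : (kF α β a c y)⁻¹ *
        (∑ j, fderiv ℝ (kF α β a c) y (Pi.single j 1) * ((α j : ℝ) * y j))
        = T / (1 + T) := by
      rw [happ, hfd]
      simp only [ContinuousLinearMap.smul_apply, smul_eq_mul]
      rw [hLw, hκy, Real.rpow_sub hS, Real.rpow_one]
      have hA : ((1 + T) ^ r : ℝ) ≠ 0 := hκpos.ne'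
      calc ((1 + T) ^ r)⁻¹ * (r * ((1 + T) ^ r / (1 + T)) * (2 * (c : ℝ) * T))
          = (r * (2 * (c : ℝ))) * (((1 + T) ^ r)⁻¹ * (1 + T) ^ r) * (T / (1 + T)) := by
            ring
        _ = T / (1 + T) := by rw [inv_mul_cancel₀ hA, hr2c]; ring
    constructor
    · intro h
      set s : ℝ := (kF α β a c y)⁻¹ *
        (∑ j, fderiv ℝ (kF α β a c) y (Pi.single j 1) * v j) with hsdef
      have hv : ∀ i, v i = s * ((α i : ℝ) * y i) := by
        intro i
        have := congrFun h i
        simpa [sub_eq_zero] using this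
      have hveq : v = s • (fun i => (α i : ℝ) * y i) := by
        funext i; simpa using hv i
      have hsum : ∑ j, fderiv ℝ (kF α β a c) y (Pi.single j 1) * v j
          = s * ∑ j, fderiv ℝ (kF α β a c) y (Pi.single j 1) * ((α j : ℝ) * y j) := by
        rw [Finset.mul_sum]
        refine Finset.sum_congr rfl fun j _ => ?_
        rw [hv j]; ring
      have hseq : s = s * (T / (1 + T)) := by
        calc s = (kF α β a c y)⁻¹ *
            (∑ j, fderiv ℝ (kF α β a c) y (Pi.single j 1) * v j) := hsdef
          _ = s * ((kF α β a c y)⁻¹ *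
              (∑ j, fderiv ℝ (kF α β a c) y (Pi.single j 1) * ((α j : ℝ) * y j))) := by
            rw [hsum]; ring
          _ = s * (T / (1 + T)) := by rw [hval]
      have hs0 : s = 0 := by
        have h1 : s * (1 - T / (1 + T)) = 0 := by linarith [hseq]
        have h2 : 1 - T / (1 + T) = 1 / (1 + T) := by field_simp; ring
        rw [h2] at h1
        have : (1 : ℝ) / (1 + T) ≠ 0 := by positivity
        exact (mul_eq_zero.mp h1).resolve_right this
      funext i
      simp [hv i, hs0]
    · intro h
      subst h
      funext i
      simp
  exact ⟨key, fun f y => (key y (f y)).symm⟩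
end

section
/- Let f : ℝⁿ → ℝⁿ be any map and k ∈ ℤ, and let f̃ and g be defined from f as in the context. Then for every y ∈ ℝⁿ with x = T(y), the Fréchet derivative of T at y applied to the vector f(y) equals κ(y)^{k} · g(x); that is, the push-forward under T of the vector field f equals κ^{k} times the desingularized vector field g. -/
open Finset

/-- `κ̂(x) = (1 − ∑_{i∈I} aᵢ xᵢ^{2βᵢ})^{−1/(2c)}`, i.e. `κ(T⁻¹(x))` for `x ∈ D`. -/
noncomputable def kHat {n : ℕ} (α β : Fin n → ℕ) (a : Fin n → ℝ) (c : ℕ)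
    (x : Fin n → ℝ) : ℝ :=
  (1 - ∑ i ∈ univ.filter (fun i => 0 < α i), a i * x i ^ (2 * β i)) ^ (-(1 : ℝ) / (2 * (c : ℝ)))

/-- `f̃ⱼ(x) = κ̂(x)^{−(k+αⱼ)} fⱼ(κ̂(x)^{α₁}x₁,…,κ̂(x)^{αₙ}xₙ)`. -/
noncomputable def fTil {n : ℕ} (α β : Fin n → ℕ) (a : Fin n → ℝ) (c : ℕ) (k : ℤ)
    (f : (Fin n → ℝ) → Fin n → ℝ) (x : Fin n → ℝ) (j : Fin n) : ℝ :=
  (kHat α β a c x) ^ (-(k + (α j : ℤ))) *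
    f (fun i => (kHat α β a c x) ^ (α i) * x i) j

/-- `S(x) = ∑_{j∈I} βⱼ aⱼ xⱼ^{2βⱼ−1} f̃ⱼ(x)`. -/
noncomputable def SF {n : ℕ} (α β : Fin n → ℕ) (a : Fin n → ℝ) (c : ℕ) (k : ℤ)
    (f : (Fin n → ℝ) → Fin n → ℝ) (x : Fin n → ℝ) : ℝ :=
  ∑ j ∈ univ.filter (fun i => 0 < α i),
    (β j : ℝ) * a j * x j ^ (2 * β j - 1) * fTil α β a c k f x j

/-- The desingularized vector field `gᵢ(x) = f̃ᵢ(x) − (αᵢ xᵢ / c) S(x)`. -/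
noncomputable def gDesing {n : ℕ} (α β : Fin n → ℕ) (a : Fin n → ℝ) (c : ℕ) (k : ℤ)
    (f : (Fin n → ℝ) → Fin n → ℝ) (x : Fin n → ℝ) : Fin n → ℝ :=
  fun i => fTil α β a c k f x i - ((α i : ℝ) * x i / (c : ℝ)) * SF α β a c k f x

/-- The push-forward under `T` of the vector field `f` equals `κᵏ` times the
desingularized vector field `g`: `DT(y) f(y) = κ(y)ᵏ g(T(y))`. -/
theorem pushforward_eq_kappa_pow_mul_desing
    {n : ℕ} (hn : 1 ≤ n) (α β : Fin n → ℕ) (a : Fin n → ℝ) (c : ℕ)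
    (hα : ∃ i, 0 < α i) (hc : 0 < c)
    (hαβ : ∀ i, 0 < α i → α i * β i = c)
    (hβ0 : ∀ i, α i = 0 → β i = 0)
    (ha : ∀ i, 1 ≤ a i)
    (k : ℤ) (f : (Fin n → ℝ) → Fin n → ℝ) (y : Fin n → ℝ) :
    fderiv ℝ (TqP α β a c) y (f y) =
      fun i => (kF α β a c y) ^ k * gDesing α β a c k f (TqP α β a c y) i := by
  classical
  have hcR : (0:ℝ) < (c:ℝ) := by exact_mod_cast hc
  have hc0 : (c:ℝ) ≠ 0 := hcR.ne'
  have h2c0 : (2 * (c:ℝ)) ≠ 0 := by positivity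
  set QF : (Fin n → ℝ) → ℝ :=
    fun z => 1 + ∑ i ∈ univ.filter (fun i => 0 < α i), a i * z i ^ (2 * β i) with hQF
  set r : ℝ := 1 / (2 * (c:ℝ)) with hr
  have hsum_nonneg : ∀ z : Fin n → ℝ,
      0 ≤ ∑ i ∈ univ.filter (fun i => 0 < α i), a i * z i ^ (2 * β i) := by
    intro z
    refine Finset.sum_nonneg fun i _ => mul_nonneg (zero_le_one.trans (ha i)) ?_
    rw [mul_comm, pow_mul]
    positivity
  have hQpos : ∀ z, (0:ℝ) < QF z := by
    intro z
    have := hsum_nonneg z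
    rw [hQF]
    dsimp only
    linarith
  have hkFeq : ∀ z, kF α β a c z = QF z ^ r := by
    intro z
    have hpow : pF α β a c z ^ (2 * c)
        = ∑ i ∈ univ.filter (fun i => 0 < α i), a i * z i ^ (2 * β i) := by
      rw [pF, ← Real.rpow_natCast _ (2 * c), ← Real.rpow_mul (hsum_nonneg z)]
      push_cast
      rw [one_div, inv_mul_cancel₀ h2c0, Real.rpow_one]
    rw [kF, hpow, hQF, hr]
  set κ : ℝ := kF α β a c y with hκdef
  have hκpos : 0 < κ := by
    rw [hκdef, hkFeq]
    exact Real.rpow_pos_of_pos (hQpos y) r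
  have hκne : κ ≠ 0 := hκpos.ne'
  have hκ2c : κ ^ (2 * c) = QF y := by
    rw [hκdef, hkFeq, ← Real.rpow_natCast (QF y ^ r) (2 * c),
      ← Real.rpow_mul (hQpos y).le]
    push_cast
    rw [hr, one_div, inv_mul_cancel₀ h2c0, Real.rpow_one]
  -- the derivative of QF
  set L : (Fin n → ℝ) →L[ℝ] ℝ :=
    ∑ j ∈ univ.filter (fun i => 0 < α i),
      a j • ((((2 * β j : ℕ) : ℝ) * y j ^ (2 * β j - 1)) • ContinuousLinearMap.proj j)
    with hLdef
  have hQder : HasFDerivAt QF L y := by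
    rw [hQF, hLdef]
    refine HasFDerivAt.const_add 1 ?_
    refine HasFDerivAt.fun_sum fun j _ => ?_
    exact ((hasDerivAt_pow (2 * β j) (y j)).comp_hasFDerivAt y
      (hasFDerivAt_apply j y)).const_mul (a j)
  have hKder : HasFDerivAt (kF α β a c) ((r * QF y ^ (r - 1)) • L) y := by
    have h2 : kF α β a c = fun z => QF z ^ r := funext hkFeq
    rw [h2]
    exact hQder.rpow_const (Or.inl (hQpos y).ne')
  have hTco : ∀ i, HasFDerivAt (fun z : Fin n → ℝ => z i / kF α β a c z ^ α i)
      (y i • ((-((κ ^ α i) ^ 2)⁻¹) •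
          (((α i : ℝ) * κ ^ (α i - 1)) • ((r * QF y ^ (r - 1)) • L)))
        + (κ ^ α i)⁻¹ • ContinuousLinearMap.proj i) y := by
    intro i
    have hpow : HasFDerivAt (fun z => kF α β a c z ^ α i)
        (((α i : ℝ) * κ ^ (α i - 1)) • ((r * QF y ^ (r - 1)) • L)) y :=
      (hasDerivAt_pow (α i) κ).comp_hasFDerivAt y hKder
    have hinv : HasFDerivAt (fun z => (kF α β a c z ^ α i)⁻¹)
        ((-((κ ^ α i) ^ 2)⁻¹) •
          (((α i : ℝ) * κ ^ (α i - 1)) • ((r * QF y ^ (r - 1)) • L))) y :=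
      (hasDerivAt_inv (pow_ne_zero _ hκne)).comp_hasFDerivAt y hpow
    have hmul := (hasFDerivAt_apply i y).mul hinv
    simp only [div_eq_mul_inv]
    exact hmul
  have hT : HasFDerivAt (TqP α β a c)
      (ContinuousLinearMap.pi fun i =>
        y i • ((-((κ ^ α i) ^ 2)⁻¹) •
            (((α i : ℝ) * κ ^ (α i - 1)) • ((r * QF y ^ (r - 1)) • L)))
          + (κ ^ α i)⁻¹ • ContinuousLinearMap.proj i) y := by
    unfold TqP
    exact hasFDerivAt_pi.mpr hTco
  rw [hT.fderiv]
  funext i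
  -- abbreviations on the x side
  have hxT : TqP α β a c y = fun j => y j / κ ^ α j := rfl
  have hkHat : kHat α β a c (TqP α β a c y) = κ := by
    have hsum : ∑ j ∈ univ.filter (fun i => 0 < α i),
        a j * (TqP α β a c y j) ^ (2 * β j) = (QF y - 1) * (QF y)⁻¹ := by
      have hterm : ∀ j ∈ univ.filter (fun i => 0 < α i),
          a j * (TqP α β a c y j) ^ (2 * β j)
            = (a j * y j ^ (2 * β j)) * (QF y)⁻¹ := by
        intro j hj
        have hjα : 0 < α j := (Finset.mem_filter.mp hj).2
        have hpoweq : (κ ^ α j) ^ (2 * β j) = QF y := by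
          rw [← pow_mul, show α j * (2 * β j) = 2 * c by
            rw [show α j * (2 * β j) = 2 * (α j * β j) by ring, hαβ j hjα], hκ2c]
        rw [hxT]
        dsimp only
        rw [div_pow, hpoweq, div_eq_mul_inv]
        ring
      rw [Finset.sum_congr rfl hterm, ← Finset.sum_mul]
      congr 1
      rw [hQF]
      dsimp only
      ring
    rw [kHat, hsum]
    have h1 : (1 : ℝ) - (QF y - 1) * (QF y)⁻¹ = (QF y)⁻¹ := by
      field_simp [(hQpos y).ne']
      ring
    rw [h1, show -(1:ℝ)/(2*(c:ℝ)) = -r by rw [hr]; ring,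
      Real.rpow_neg (inv_nonneg.mpr (hQpos y).le),
      Real.inv_rpow (hQpos y).le, inv_inv, hκdef, hkFeq]
  have harg : (fun j => κ ^ α j * TqP α β a c y j) = y := by
    funext j
    rw [hxT]
    dsimp only
    field_simp
  have hfTil : ∀ j, fTil α β a c k f (TqP α β a c y) j
      = κ ^ (-(k + (α j : ℤ))) * f y j := by
    intro j
    rw [fTil, hkHat, harg]
  -- rewrite integer powers of κ
  set t : ℝ := κ ^ k with htdef
  have ht0 : t ≠ 0 := zpow_ne_zero k hκne
  have hz1 : ∀ m : ℕ, κ ^ (-(k + (m : ℤ))) = t⁻¹ * (κ ^ m)⁻¹ := by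
    intro m
    rw [neg_add, zpow_add₀ hκne, zpow_neg, zpow_neg, zpow_natCast, htdef]
  -- the sum Ss
  set Ss : ℝ := ∑ j ∈ univ.filter (fun i => 0 < α i),
    (β j : ℝ) * a j * y j ^ (2 * β j - 1) * f y j with hSs
  have hLapp : L (f y) = 2 * Ss := by
    rw [hLdef, hSs]
    simp only [ContinuousLinearMap.sum_apply, ContinuousLinearMap.smul_apply,
      ContinuousLinearMap.proj_apply, smul_eq_mul]
    rw [Finset.mul_sum]
    refine Finset.sum_congr rfl fun j hj => ?_
    push_cast
    ring
  have hSF : SF α β a c k f (TqP α β a c y) = t⁻¹ * (κ ^ (2 * c))⁻¹ * Ss := by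
    rw [SF, hSs, Finset.mul_sum]
    refine Finset.sum_congr rfl fun j hj => ?_
    have hjα : 0 < α j := (Finset.mem_filter.mp hj).2
    have hβj : 1 ≤ β j := by
      have h1 := hαβ j hjα
      rcases Nat.eq_zero_or_pos (β j) with h | h
      · rw [h, mul_zero] at h1; omega
      · exact h
    have hexp : α j * (2 * β j - 1) + α j = 2 * c := by
      have h1 := hαβ j hjα
      have h2 : 2 * β j - 1 + 1 = 2 * β j := by omega
      calc α j * (2 * β j - 1) + α j = α j * ((2 * β j - 1) + 1) := by ring
        _ = α j * (2 * β j) := by rw [h2]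
        _ = 2 * (α j * β j) := by ring
        _ = 2 * c := by rw [h1]
    rw [hfTil j, hz1, hxT]
    dsimp only
    have hz : (y j / κ ^ α j) ^ (2 * β j - 1)
        = y j ^ (2 * β j - 1) * (κ ^ (α j * (2 * β j - 1)))⁻¹ := by
      rw [div_pow, ← pow_mul, div_eq_mul_inv]
    rw [hz]
    have hinv2 : ((κ ^ (α j * (2 * β j - 1)) : ℝ))⁻¹ * (κ ^ (α j))⁻¹
        = (κ ^ (2 * c))⁻¹ := by
      rw [← mul_inv, ← pow_add, hexp]
    calc (β j : ℝ) * a j * (y j ^ (2 * β j - 1) * (κ ^ (α j * (2 * β j - 1)))⁻¹) *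
          (t⁻¹ * (κ ^ α j)⁻¹ * f y j)
        = ((κ ^ (α j * (2 * β j - 1)))⁻¹ * (κ ^ (α j))⁻¹) *
            ((β j : ℝ) * a j * y j ^ (2 * β j - 1) * f y j * t⁻¹) := by ring
      _ = (κ ^ (2 * c))⁻¹ * ((β j : ℝ) * a j * y j ^ (2 * β j - 1) * f y j * t⁻¹) := by
          rw [hinv2]
      _ = t⁻¹ * (κ ^ (2 * c))⁻¹ * ((β j : ℝ) * a j * y j ^ (2 * β j - 1) * f y j) := by
          ring
  have hQr1 : QF y ^ (r - 1) = κ * (κ ^ (2 * c))⁻¹ := by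
    rw [Real.rpow_sub (hQpos y), Real.rpow_one, hκ2c, hκdef, hkFeq, div_eq_mul_inv]
  -- evaluate the derivative at f y, coordinate i
  simp only [ContinuousLinearMap.pi_apply, ContinuousLinearMap.add_apply,
    ContinuousLinearMap.smul_apply, ContinuousLinearMap.proj_apply, smul_eq_mul]
  rw [hLapp, hQr1]
  rw [gDesing]
  rw [hfTil i, hz1, hSF, hxT]
  dsimp only
  rw [hr]
  rcases Nat.eq_zero_or_pos (α i) with hA0 | hApos
  · simp only [hA0, Nat.cast_zero, pow_zero, Nat.zero_sub, zero_mul, mul_zero,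
      neg_zero, inv_one, one_mul, zero_div, zero_add]
    field_simp
    simp
  · obtain ⟨B, hAB⟩ : ∃ B, α i = B + 1 := ⟨α i - 1, by omega⟩
    rw [hAB]
    simp only [Nat.add_sub_cancel]
    have hκB : (κ : ℝ) ^ (B + 1) ≠ 0 := pow_ne_zero _ hκne
    have hκ2cne : (κ : ℝ) ^ (2 * c) ≠ 0 := pow_ne_zero _ hκne
    push_cast
    field_simp
    ring
end

section
/- Suppose f : ℝⁿ → ℝⁿ is continuous and asymptotically quasi-homogeneous of type α and order k+1 at infinity with continuous quasi-homogeneous part f_{α,k}. Then the desingularized vector field g : D → ℝⁿ extends to a continuous map G on the closed disk D̄ = {x ∈ ℝⁿ : p(x) ≤ 1}, and for every x on the horizon E = {p(x) = 1} the extension is given by Gᵢ(x) = (f_{α,k})ᵢ(x) − (αᵢ xᵢ / c) · ∑_{j∈I} βⱼ aⱼ xⱼ^{2βⱼ−1} (f_{α,k})ⱼ(x). -/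
open Finset Filter Topology

/-- `fak` is quasi-homogeneous of type `α` and order `k+1`:
`(f_{α,k})ⱼ(R^{α₁}x₁,…,R^{αₙ}xₙ) = R^{k+αⱼ} (f_{α,k})ⱼ(x)` for all `x, R`. -/
def IsQH {n : ℕ} (α : Fin n → ℕ) (k : ℕ)
    (fak : (Fin n → ℝ) → Fin n → ℝ) : Prop :=
  ∀ (x : Fin n → ℝ) (R : ℝ) (j : Fin n),
    fak (fun i => R ^ (α i) * x i) j = R ^ (k + α j) * fak x j

/-- `f` is asymptotically quasi-homogeneous of type `α` and order `k+1` at infinity,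
with quasi-homogeneous part `fak`: the renormalized difference tends to `0` as
`R → +∞`, uniformly for `(xᵢ)_{i∈I}` on the unit sphere and the remaining
coordinates in an arbitrary fixed compact set. -/
def IsAQH {n : ℕ} (α : Fin n → ℕ) (k : ℕ)
    (f fak : (Fin n → ℝ) → Fin n → ℝ) : Prop :=
  IsQH α k fak ∧
  ∀ K : Set (Fin n → ℝ), IsCompact K → ∀ ε : ℝ, 0 < ε → ∃ R₀ : ℝ,
    ∀ R : ℝ, R₀ ≤ R → ∀ x ∈ K,
      (∑ i ∈ univ.filter (fun i => 0 < α i), x i ^ 2) = 1 →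
      ∀ j : Fin n,
        |R ^ (-((k : ℤ) + (α j : ℤ))) *
          (f (fun i => R ^ (α i) * x i) j - R ^ (k + α j) * fak x j)| < ε


namespace DesingAux

variable {n : ℕ}

noncomputable def sSum (α β : Fin n → ℕ) (a : Fin n → ℝ) (x : Fin n → ℝ) : ℝ :=
  ∑ i ∈ univ.filter (fun i => 0 < α i), a i * x i ^ (2 * β i)

noncomputable def phi (α : Fin n → ℕ) (x : Fin n → ℝ) (t : ℝ) : ℝ :=
  ∑ i ∈ univ.filter (fun i => 0 < α i), (t ^ (α i) * x i) ^ 2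

lemma continuous_sSum (α β : Fin n → ℕ) (a : Fin n → ℝ) :
    Continuous (sSum α β a) := by
  unfold sSum
  exact continuous_finset_sum _ fun i _ =>
    (continuous_const.mul ((continuous_apply i).pow _))

lemma sSum_nonneg (α β : Fin n → ℕ) (a : Fin n → ℝ) (ha : ∀ i, 1 ≤ a i)
    (x : Fin n → ℝ) : 0 ≤ sSum α β a x := by
  refine Finset.sum_nonneg fun i _ => mul_nonneg (le_trans zero_le_one (ha i)) ?_
  rw [mul_comm, pow_mul]
  positivity

lemma pF_eq (α β : Fin n → ℕ) (a : Fin n → ℝ) (c : ℕ) (x : Fin n → ℝ) :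
    pF α β a c x = sSum α β a x ^ ((1:ℝ) / (2 * c)) := rfl

lemma pF_lt_one_iff (α β : Fin n → ℕ) (a : Fin n → ℝ) (c : ℕ) (hc : 0 < c)
    (ha : ∀ i, 1 ≤ a i) (x : Fin n → ℝ) :
    pF α β a c x < 1 ↔ sSum α β a x < 1 := by
  have he : (0:ℝ) < (1:ℝ) / (2 * c) := by positivity
  rw [pF_eq]
  constructor
  · intro h
    by_contra hs
    push_neg at hs
    have := Real.one_le_rpow hs he.le
    linarith
  · intro h
    exact Real.rpow_lt_one (sSum_nonneg α β a ha x) h he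

lemma pF_eq_one_iff (α β : Fin n → ℕ) (a : Fin n → ℝ) (c : ℕ) (hc : 0 < c)
    (ha : ∀ i, 1 ≤ a i) (x : Fin n → ℝ) :
    pF α β a c x = 1 ↔ sSum α β a x = 1 := by
  have he : (0:ℝ) < (1:ℝ) / (2 * c) := by positivity
  constructor
  · intro h
    rcases lt_trichotomy (sSum α β a x) 1 with hs | hs | hs
    · exact absurd h ((pF_lt_one_iff α β a c hc ha x).2 hs).ne
    · exact hs
    · have := Real.one_lt_rpow hs he
      rw [pF_eq] at h; linarith
  · intro h; rw [pF_eq, h, Real.one_rpow]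

lemma pF_le_one_iff (α β : Fin n → ℕ) (a : Fin n → ℝ) (c : ℕ) (hc : 0 < c)
    (ha : ∀ i, 1 ≤ a i) (x : Fin n → ℝ) :
    pF α β a c x ≤ 1 ↔ sSum α β a x ≤ 1 := by
  rw [le_iff_lt_or_eq, le_iff_lt_or_eq, pF_lt_one_iff α β a c hc ha,
    pF_eq_one_iff α β a c hc ha]


lemma continuous_phi_t (α : Fin n → ℕ) (x : Fin n → ℝ) :
    Continuous (phi α x) := by
  unfold phi
  exact continuous_finset_sum _ fun i _ =>
    (((continuous_pow _).mul continuous_const).pow _)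

lemma continuous_phi_x (α : Fin n → ℕ) (t : ℝ) :
    Continuous (fun x : Fin n → ℝ => phi α x t) := by
  unfold phi
  exact continuous_finset_sum _ fun i _ =>
    ((continuous_const.mul (continuous_apply i)).pow _)

lemma phi_strictMonoOn (α : Fin n → ℕ) (x : Fin n → ℝ) {i₀ : Fin n}
    (hi₀ : 0 < α i₀) (hx : x i₀ ≠ 0) :
    StrictMonoOn (phi α x) (Set.Ici 0) := by
  intro t₁ ht₁ t₂ ht₂ h
  unfold phi
  refine Finset.sum_lt_sum (fun i hi => ?_) ⟨i₀, by simp [hi₀], ?_⟩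
  · have h1 : t₁ ^ (α i) ≤ t₂ ^ (α i) := pow_le_pow_left₀ ht₁ h.le _
    have h0 : (0:ℝ) ≤ t₁ ^ (α i) := pow_nonneg ht₁ _
    have h2 : (t₁ ^ α i) ^ 2 ≤ (t₂ ^ α i) ^ 2 := pow_le_pow_left₀ h0 h1 _
    calc (t₁ ^ α i * x i) ^ 2 = (t₁ ^ α i) ^ 2 * (x i) ^ 2 := by ring
      _ ≤ (t₂ ^ α i) ^ 2 * (x i) ^ 2 := by nlinarith [sq_nonneg (x i)]
      _ = (t₂ ^ α i * x i) ^ 2 := by ring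
  · have h1 : t₁ ^ (α i₀) < t₂ ^ (α i₀) := pow_lt_pow_left₀ h ht₁ hi₀.ne'
    have h0 : (0:ℝ) ≤ t₁ ^ (α i₀) := pow_nonneg ht₁ _
    have h2 : (t₁ ^ α i₀) ^ 2 < (t₂ ^ α i₀) ^ 2 := pow_lt_pow_left₀ h1 h0 two_ne_zero
    have hx2 : (0:ℝ) < (x i₀) ^ 2 := by positivity
    calc (t₁ ^ α i₀ * x i₀) ^ 2 = (t₁ ^ α i₀) ^ 2 * (x i₀) ^ 2 := by ring
      _ < (t₂ ^ α i₀) ^ 2 * (x i₀) ^ 2 := by nlinarith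
      _ = (t₂ ^ α i₀ * x i₀) ^ 2 := by ring

lemma phi_zero (α : Fin n → ℕ) (x : Fin n → ℝ) : phi α x 0 = 0 := by
  unfold phi
  refine Finset.sum_eq_zero fun i hi => ?_
  simp only [mem_filter] at hi
  rw [zero_pow hi.2.ne', zero_mul]
  simp

lemma exists_phi_eq_one (α : Fin n → ℕ) (x : Fin n → ℝ) {i₀ : Fin n}
    (hi₀ : 0 < α i₀) (hx : x i₀ ≠ 0) :
    ∃ t, 0 < t ∧ phi α x t = 1 := by
  have hx2 : (0:ℝ) < (x i₀) ^ 2 := by positivity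
  set T : ℝ := max 1 (2 / (x i₀) ^ 2) with hT
  have hT1 : (1:ℝ) ≤ T := le_max_left _ _
  have hT0 : (0:ℝ) ≤ T := zero_le_one.trans hT1
  have hTlarge : (1:ℝ) ≤ phi α x T := by
    have h1 : T ≤ T ^ (α i₀) := le_self_pow₀ hT1 hi₀.ne'
    have h3 : (1:ℝ) ≤ T ^ (α i₀) := hT1.trans h1
    have h2 : 2 / (x i₀)^2 ≤ T := le_max_right _ _
    have h4 : 2 ≤ T * (x i₀)^2 := by rw [div_le_iff₀ hx2] at h2; linarith
    have hterm : (1:ℝ) ≤ (T ^ (α i₀) * x i₀) ^ 2 := by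
      have h5 : 2 ≤ T ^ (α i₀) * (x i₀)^2 :=
        h4.trans (mul_le_mul_of_nonneg_right h1 hx2.le)
      have h6 : T ^ (α i₀) * (x i₀)^2 ≤ T ^ (α i₀) * (T ^ (α i₀) * (x i₀)^2) :=
        le_mul_of_one_le_left (by positivity) h3
      have h7 : (T ^ (α i₀) * x i₀) ^ 2 = T ^ (α i₀) * (T ^ (α i₀) * (x i₀)^2) := by ring
      linarith
    have : (T ^ (α i₀) * x i₀) ^ 2 ≤ phi α x T := by
      unfold phi
      refine Finset.single_le_sum (fun i _ => sq_nonneg (T ^ (α i) * x i)) ?_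
      simp [hi₀]
    linarith
  have hIVT := intermediate_value_Icc hT0 ((continuous_phi_t α x).continuousOn)
  have h1mem : (1:ℝ) ∈ Set.Icc (phi α x 0) (phi α x T) := by
    rw [phi_zero]; exact ⟨zero_le_one, hTlarge⟩
  obtain ⟨t, ht, hphit⟩ := hIVT h1mem
  refine ⟨t, ?_, hphit⟩
  rcases ht.1.lt_or_eq with h | h
  · exact h
  · exfalso; rw [← h, phi_zero] at hphit; norm_num at hphit

-- The normalization radius `ρ(x)`: unique positive `t` with `φ(x,t)=1`.
open Classical in
noncomputable def rho (α : Fin n → ℕ) (x : Fin n → ℝ) : ℝ :=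
  if h : ∃ t, 0 < t ∧ phi α x t = 1 then h.choose else 1

lemma rho_spec (α : Fin n → ℕ) (x : Fin n → ℝ) {i₀ : Fin n}
    (hi₀ : 0 < α i₀) (hx : x i₀ ≠ 0) :
    0 < rho α x ∧ phi α x (rho α x) = 1 := by
  have h : ∃ t, 0 < t ∧ phi α x t = 1 := exists_phi_eq_one α x hi₀ hx
  classical
  rw [rho, dif_pos h]
  exact h.choose_spec


lemma eventually_ne (x₀ : Fin n → ℝ) (i₀ : Fin n) (hx₀ : x₀ i₀ ≠ 0) :
    ∀ᶠ x in 𝓝 x₀, x i₀ ≠ 0 :=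
  (continuous_apply i₀).continuousAt.eventually_ne hx₀

lemma tendsto_rho (α : Fin n → ℕ) (x₀ : Fin n → ℝ) {i₀ : Fin n}
    (hi₀ : 0 < α i₀) (hx₀ : x₀ i₀ ≠ 0) :
    Tendsto (rho α) (𝓝 x₀) (𝓝 (rho α x₀)) := by
  obtain ⟨hρ0, hρ1⟩ := rho_spec α x₀ hi₀ hx₀
  rw [tendsto_order]
  constructor
  · intro b hb
    rcases lt_or_ge b 0 with hb0 | hb0
    · filter_upwards [eventually_ne x₀ i₀ hx₀] with x hx
      exact hb0.trans (rho_spec α x hi₀ hx).1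
    · have hlt : phi α x₀ b < 1 := by
        rw [← hρ1]
        exact phi_strictMonoOn α x₀ hi₀ hx₀ hb0 hρ0.le hb
      have hev : ∀ᶠ x in 𝓝 x₀, phi α x b < 1 :=
        (continuous_phi_x α b).continuousAt.eventually_lt continuousAt_const hlt
      filter_upwards [hev, eventually_ne x₀ i₀ hx₀] with x h1 hx
      obtain ⟨hr0, hr1⟩ := rho_spec α x hi₀ hx
      by_contra hcon
      push_neg at hcon
      have := (phi_strictMonoOn α x hi₀ hx).monotoneOn hr0.le hb0 hcon
      rw [hr1] at this
      linarith
  · intro b hb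
    have hb0 : (0:ℝ) ≤ b := (hρ0.trans hb).le
    have hlt : 1 < phi α x₀ b := by
      rw [← hρ1]
      exact phi_strictMonoOn α x₀ hi₀ hx₀ hρ0.le hb0 hb
    have hev : ∀ᶠ x in 𝓝 x₀, 1 < phi α x b :=
      continuousAt_const.eventually_lt (continuous_phi_x α b).continuousAt hlt
    filter_upwards [hev, eventually_ne x₀ i₀ hx₀] with x h1 hx
    obtain ⟨hr0, hr1⟩ := rho_spec α x hi₀ hx
    by_contra hcon
    push_neg at hcon
    have := (phi_strictMonoOn α x hi₀ hx).monotoneOn hb0 hr0.le hcon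
    rw [hr1] at this
    linarith

lemma kHat_eq (α β : Fin n → ℕ) (a : Fin n → ℝ) (c : ℕ) (x : Fin n → ℝ) :
    kHat α β a c x = (1 - sSum α β a x) ^ (-(1:ℝ) / (2 * c)) := rfl

lemma kHat_pos (α β : Fin n → ℕ) (a : Fin n → ℝ) (c : ℕ) {x : Fin n → ℝ}
    (hx : sSum α β a x < 1) : 0 < kHat α β a c x := by
  rw [kHat_eq]
  exact Real.rpow_pos_of_pos (by linarith) _

lemma continuousAt_kHat (α β : Fin n → ℕ) (a : Fin n → ℝ) (c : ℕ) {x : Fin n → ℝ}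
    (hx : sSum α β a x < 1) : ContinuousAt (kHat α β a c) x := by
  have h1 : ContinuousAt (fun y => 1 - sSum α β a y) x :=
    (continuous_const.sub (continuous_sSum α β a)).continuousAt
  exact h1.rpow_const (Or.inl (by simp; linarith))

lemma tendsto_kHat_atTop (α β : Fin n → ℕ) (a : Fin n → ℝ) (c : ℕ) (hc : 0 < c)
    {x₀ : Fin n → ℝ} (hx₀ : sSum α β a x₀ = 1) :
    Tendsto (kHat α β a c) (𝓝[{x | sSum α β a x < 1}] x₀) atTop := by
  have he : (0:ℝ) < (1:ℝ) / (2 * c) := by positivity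
  have hu : Tendsto (fun x => 1 - sSum α β a x) (𝓝[{x | sSum α β a x < 1}] x₀)
      (𝓝[>] (0:ℝ)) := by
    rw [tendsto_nhdsWithin_iff]
    constructor
    · have : Tendsto (fun x => 1 - sSum α β a x) (𝓝 x₀) (𝓝 (1 - sSum α β a x₀)) :=
        (continuous_const.sub (continuous_sSum α β a)).continuousAt
      rw [hx₀, sub_self] at this
      exact this.mono_left nhdsWithin_le_nhds
    · filter_upwards [self_mem_nhdsWithin] with x hx
      have hx' : sSum α β a x < 1 := hx
      exact Set.mem_Ioi.mpr (by linarith)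
  have hg : Tendsto (fun v : ℝ => (v ^ ((1:ℝ)/(2*c)))⁻¹) (𝓝[>] (0:ℝ)) atTop := by
    refine tendsto_inv_nhdsGT_zero.comp ?_
    rw [tendsto_nhdsWithin_iff]
    constructor
    · have h0 : ContinuousAt (fun v : ℝ => v ^ ((1:ℝ)/(2*c))) 0 :=
        Real.continuousAt_rpow_const 0 _ (Or.inr he.le)
      have := h0.tendsto.mono_left (nhdsWithin_le_nhds (s := Set.Ioi (0:ℝ)))
      rwa [Real.zero_rpow he.ne'] at this
    · filter_upwards [self_mem_nhdsWithin] with v hv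
      exact Real.rpow_pos_of_pos hv _
  have := hg.comp hu
  refine this.congr' ?_
  filter_upwards [self_mem_nhdsWithin] with x hx
  have hx' : sSum α β a x < 1 := hx
  simp only [Function.comp]
  rw [kHat_eq, neg_div, Real.rpow_neg (by linarith)]


lemma continuousAt_fTil (α β : Fin n → ℕ) (a : Fin n → ℝ) (c : ℕ) (k : ℤ)
    (f : (Fin n → ℝ) → Fin n → ℝ) (hf : Continuous f) (j : Fin n)
    {x : Fin n → ℝ} (hx : sSum α β a x < 1) :
    ContinuousAt (fun y => fTil α β a c k f y j) x := by
  have hk := continuousAt_kHat α β a c hx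
  have h1 : ContinuousAt (fun y => (kHat α β a c y) ^ (-(k + (α j : ℤ)))) x :=
    (continuousAt_zpow₀ _ _ (Or.inl (kHat_pos α β a c hx).ne')).comp hk
  have h2 : ContinuousAt (fun y => f (fun i => (kHat α β a c y) ^ (α i) * y i) j) x := by
    refine ((continuous_apply j).continuousAt).comp (hf.continuousAt.comp ?_)
    exact continuousAt_pi.2 fun i => ((hk.pow _).mul ((continuous_apply i).continuousAt))
  exact h1.mul h2

lemma exists_nonzero_coord (α β : Fin n → ℕ) (a : Fin n → ℝ)
    (hβ : ∀ i, 0 < α i → 0 < β i) {x₀ : Fin n → ℝ} (hx₀ : sSum α β a x₀ = 1) :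
    ∃ i₀, 0 < α i₀ ∧ x₀ i₀ ≠ 0 := by
  have hne : sSum α β a x₀ ≠ 0 := by rw [hx₀]; norm_num
  obtain ⟨i₀, hi₀mem, hi₀⟩ := Finset.exists_ne_zero_of_sum_ne_zero hne
  simp only [mem_filter, mem_univ, true_and] at hi₀mem
  refine ⟨i₀, hi₀mem, fun h => hi₀ ?_⟩
  rw [h, zero_pow, mul_zero]
  have := hβ i₀ hi₀mem
  omega

lemma tendsto_fTil_horizon (α β : Fin n → ℕ) (a : Fin n → ℝ) (c : ℕ) (hc : 0 < c)
    (hβ : ∀ i, 0 < α i → 0 < β i)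
    (k : ℕ) (hk : 1 ≤ k) (f fak : (Fin n → ℝ) → Fin n → ℝ) (hfak : Continuous fak)
    (haqh : IsAQH α k f fak) {x₀ : Fin n → ℝ} (hx₀ : sSum α β a x₀ = 1)
    (j : Fin n) :
    Tendsto (fun x => fTil α β a c (k : ℤ) f x j)
      (𝓝[{x | sSum α β a x < 1}] x₀) (𝓝 (fak x₀ j)) := by
  obtain ⟨i₀, hi₀, hx₀i₀⟩ := exists_nonzero_coord α β a hβ hx₀
  set F := 𝓝[{x | sSum α β a x < 1}] x₀ with hF
  set ρ₀ := rho α x₀ with hρ₀def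
  obtain ⟨hρ₀pos, hρ₀phi⟩ := rho_spec α x₀ hi₀ hx₀i₀
  have htρ : Tendsto (rho α) F (𝓝 ρ₀) :=
    (tendsto_rho α x₀ hi₀ hx₀i₀).mono_left nhdsWithin_le_nhds
  set N : (Fin n → ℝ) → (Fin n → ℝ) := fun x i => rho α x ^ (α i) * x i with hN
  have htN : Tendsto N F (𝓝 (N x₀)) := by
    rw [tendsto_pi_nhds]
    intro i
    exact (htρ.pow _).mul
      (((continuous_apply i).continuousAt).mono_left nhdsWithin_le_nhds)
  set m : ℕ := k + α j with hm
  -- main difference tends to 0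
  have hdiff : Tendsto (fun x => fTil α β a c (k : ℤ) f x j - fak x j) F (𝓝 0) := by
    rw [Metric.tendsto_nhds]
    intro ε hε
    have hCρ : (0:ℝ) < (ρ₀ / 2) ^ m := by positivity
    set ε' := ε * (ρ₀ / 2) ^ m with hε'def
    have hε' : 0 < ε' := by positivity
    have hKcpt : IsCompact (Metric.closedBall (0 : Fin n → ℝ) (‖N x₀‖ + 1)) :=
      isCompact_closedBall _ _
    obtain ⟨R₀, hR₀⟩ := haqh.2 _ hKcpt ε' hε'
    have E1 : ∀ᶠ x in F, ρ₀ / 2 < rho α x ∧ rho α x < 2 * ρ₀ := by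
      filter_upwards [htρ.eventually (eventually_gt_nhds (show ρ₀/2 < ρ₀ by
          simp only [hρ₀def]; linarith)),
        htρ.eventually (eventually_lt_nhds (show ρ₀ < 2*ρ₀ by
          simp only [hρ₀def]; linarith))] with x h1 h2
      exact ⟨h1, h2⟩
    have E2 : ∀ᶠ x in F, N x ∈ Metric.closedBall (0 : Fin n → ℝ) (‖N x₀‖ + 1) := by
      filter_upwards [htN.eventually (Metric.ball_mem_nhds (N x₀) one_pos)] with x h1
      rw [Metric.mem_closedBall, dist_zero_right]
      have htri := dist_triangle (N x) (N x₀) 0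
      simp only [dist_zero_right] at htri
      calc ‖N x‖ ≤ dist (N x) (N x₀) + ‖N x₀‖ := htri
        _ ≤ ‖N x₀‖ + 1 := by linarith
    have E3 : ∀ᶠ x in F, x i₀ ≠ 0 :=
      (eventually_ne x₀ i₀ hx₀i₀).filter_mono nhdsWithin_le_nhds
    have E4 : ∀ᶠ x in F, (max R₀ 1) * (2 * ρ₀) ≤ kHat α β a c x :=
      (tendsto_kHat_atTop α β a c hc hx₀).eventually_ge_atTop _
    have E5 : ∀ᶠ x in F, sSum α β a x < 1 := self_mem_nhdsWithin
    filter_upwards [E1, E2, E3, E4, E5] with x hE1 hE2 hE3 hE4 hE5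
    obtain ⟨hρpos, hρphi⟩ := rho_spec α x hi₀ hE3
    set ρx := rho α x with hρx
    set κ := kHat α β a c x with hκdef
    have hκpos : 0 < κ := kHat_pos α β a c hE5
    set R := κ / ρx with hRdef
    have hRge : max R₀ 1 ≤ R := by
      rw [hRdef, le_div_iff₀ hρpos]
      calc max R₀ 1 * ρx ≤ max R₀ 1 * (2 * ρ₀) := by
            have h1 : (0:ℝ) ≤ max R₀ 1 := le_trans zero_le_one (le_max_right _ _)
            exact mul_le_mul_of_nonneg_left hE1.2.le h1
        _ ≤ κ := hE4
    have hRpos : 0 < R := lt_of_lt_of_le (lt_of_lt_of_le one_pos (le_max_right _ _)) hRge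
    have hκeq : κ = R * ρx := by
      rw [hRdef, div_mul_cancel₀ _ hρpos.ne']
    -- sphere condition
    have hsphere : (∑ i ∈ univ.filter (fun i => 0 < α i), (N x) i ^ 2) = 1 := hρphi
    have hmain := hR₀ R (le_trans (le_max_left _ _) hRge) (N x) hE2 hsphere j
    -- rewrite the argument of f
    have harg : (fun i => R ^ (α i) * (N x) i) = (fun i => κ ^ (α i) * x i) := by
      funext i
      rw [hN]
      simp only
      rw [hκeq, mul_pow]
      ring
    -- quasi-homogeneity
    have hqh : fak (N x) j = ρx ^ m * fak x j := haqh.1 x ρx j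
    rw [harg, hqh] at hmain
    -- algebra
    set A := f (fun i => κ ^ (α i) * x i) j with hA
    set B := fak x j with hB
    have hzpow : ∀ (u : ℝ), u ≠ 0 → u ^ (-((k:ℤ) + (α j : ℤ))) = (u ^ m)⁻¹ := by
      intro u hu
      rw [hm]
      rw [← zpow_natCast u (k + α j)]
      rw [← zpow_neg]
      norm_cast
    have hfTil : fTil α β a c (k : ℤ) f x j = (κ ^ m)⁻¹ * A := by
      rw [fTil, ← hκdef, ← hA, hzpow κ hκpos.ne']
    have hmabs : |R ^ (-((k:ℤ) + (α j : ℤ))) * (A - R ^ m * (ρx ^ m * B))| < ε' :=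
      hmain
    rw [hzpow R hRpos.ne'] at hmabs
    have hiden : fTil α β a c (k : ℤ) f x j - B =
        (ρx ^ m)⁻¹ * ((R ^ m)⁻¹ * (A - R ^ m * (ρx ^ m * B))) := by
      rw [hfTil, hκeq, mul_pow]
      have h1 : (R:ℝ) ^ m ≠ 0 := pow_ne_zero _ hRpos.ne'
      have h2 : (ρx:ℝ) ^ m ≠ 0 := pow_ne_zero _ hρpos.ne'
      field_simp
    rw [Real.dist_eq, sub_zero, hiden, abs_mul, abs_inv, abs_pow,
      abs_of_pos hρpos]
    have hρm : (ρ₀ / 2) ^ m < ρx ^ m := by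
      exact pow_lt_pow_left₀ hE1.1 (by simp only [hρ₀def] at *; linarith) (by omega)
    have hinv : (ρx ^ m)⁻¹ < ((ρ₀ / 2) ^ m)⁻¹ := by
      apply inv_strictAnti₀ hCρ hρm
    calc (ρx ^ m)⁻¹ * |(R ^ m)⁻¹ * (A - R ^ m * (ρx ^ m * B))| 
        ≤ (ρx ^ m)⁻¹ * ε' := by
          apply mul_le_mul_of_nonneg_left hmabs.le (by positivity)
      _ < ((ρ₀/2) ^ m)⁻¹ * ε' := by
          apply mul_lt_mul_of_pos_right hinv hε'
      _ = ε := by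
          rw [hε'def]
          field_simp
  -- combine
  have hfakT : Tendsto (fun x => fak x j) F (𝓝 (fak x₀ j)) :=
    (((continuous_apply j).comp hfak).continuousAt).mono_left nhdsWithin_le_nhds
  have := hdiff.add hfakT
  rw [zero_add] at this
  refine this.congr fun x => by ring

lemma beta_pos (α β : Fin n → ℕ) (c : ℕ) (hc : 0 < c)
    (hαβ : ∀ i, 0 < α i → α i * β i = c) : ∀ i, 0 < α i → 0 < β i := by
  intro i hi
  have h := hαβ i hi
  rcases Nat.eq_zero_or_pos (β i) with h0 | h0
  · rw [h0, mul_zero] at h; omega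
  · exact h0

-- Extension of `fun x j => fTil α β a c k f x j` to the closed disk.
open Classical in
noncomputable def Ftil (α β : Fin n → ℕ) (a : Fin n → ℝ) (c : ℕ) (k : ℤ)
    (f fak : (Fin n → ℝ) → Fin n → ℝ) (x : Fin n → ℝ) : Fin n → ℝ :=
  if sSum α β a x < 1 then (fun j => fTil α β a c k f x j) else fak x

lemma Ftil_of_lt (α β : Fin n → ℕ) (a : Fin n → ℝ) (c : ℕ) (k : ℤ)
    (f fak : (Fin n → ℝ) → Fin n → ℝ) {x : Fin n → ℝ} (hx : sSum α β a x < 1) :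
    Ftil α β a c k f fak x = fun j => fTil α β a c k f x j := by
  classical
  rw [Ftil, if_pos hx]

lemma Ftil_of_eq (α β : Fin n → ℕ) (a : Fin n → ℝ) (c : ℕ) (k : ℤ)
    (f fak : (Fin n → ℝ) → Fin n → ℝ) {x : Fin n → ℝ} (hx : sSum α β a x = 1) :
    Ftil α β a c k f fak x = fak x := by
  classical
  rw [Ftil, if_neg (by rw [hx]; exact lt_irrefl 1)]

lemma continuousOn_Ftil (α β : Fin n → ℕ) (a : Fin n → ℝ) (c : ℕ) (hc : 0 < c)
    (hβ : ∀ i, 0 < α i → 0 < β i) (ha : ∀ i, 1 ≤ a i)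
    (k : ℕ) (hk : 1 ≤ k) (f fak : (Fin n → ℝ) → Fin n → ℝ)
    (hf : Continuous f) (hfak : Continuous fak) (haqh : IsAQH α k f fak) :
    ContinuousOn (Ftil α β a c (k : ℤ) f fak) {x | sSum α β a x ≤ 1} := by
  intro x₀ hx₀
  have hx₀' : sSum α β a x₀ ≤ 1 := hx₀
  rcases lt_or_eq_of_le hx₀' with h | h
  · -- interior point
    have hU : IsOpen {x : Fin n → ℝ | sSum α β a x < 1} :=
      isOpen_lt (continuous_sSum α β a) continuous_const
    have hAt : ContinuousAt (fun x => (fun j => fTil α β a c (k : ℤ) f x j)) x₀ :=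
      continuousAt_pi.2 fun j => continuousAt_fTil α β a c _ f hf j h
    have heq : Ftil α β a c (k : ℤ) f fak
        =ᶠ[𝓝 x₀] fun x => (fun j => fTil α β a c (k : ℤ) f x j) := by
      filter_upwards [hU.mem_nhds h] with y hy
      exact Ftil_of_lt α β a c _ f fak hy
    exact (hAt.congr heq.symm).continuousWithinAt
  · -- horizon point
    have hs1 : sSum α β a x₀ = 1 := h
    rw [continuousWithinAt_pi]
    intro j
    have hval : Ftil α β a c (k : ℤ) f fak x₀ j = fak x₀ j := by
      rw [Ftil_of_eq α β a c _ f fak hs1]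
    show Tendsto (fun y => Ftil α β a c (k : ℤ) f fak y j)
      (𝓝[{x | sSum α β a x ≤ 1}] x₀) (𝓝 (Ftil α β a c (k : ℤ) f fak x₀ j))
    rw [hval]
    have hsplit : {x : Fin n → ℝ | sSum α β a x ≤ 1}
        = {x | sSum α β a x < 1} ∪ {x | sSum α β a x = 1} := by
      ext y; simp [le_iff_lt_or_eq]
    rw [hsplit, nhdsWithin_union, tendsto_sup]
    constructor
    · refine (tendsto_fTil_horizon α β a c hc hβ k hk f fak hfak haqh hs1 j).congr' ?_
      filter_upwards [self_mem_nhdsWithin] with y hy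
      rw [Ftil_of_lt α β a c _ f fak (hy : sSum α β a y < 1)]
    · have hT : Tendsto (fun y => fak y j) (𝓝[{x | sSum α β a x = 1}] x₀)
          (𝓝 (fak x₀ j)) :=
        (((continuous_apply j).comp hfak).continuousAt).mono_left nhdsWithin_le_nhds
      refine hT.congr' ?_
      filter_upwards [self_mem_nhdsWithin] with y hy
      rw [Ftil_of_eq α β a c _ f fak (hy : sSum α β a y = 1)]

end DesingAux

/-- If `f` is continuous and asymptotically quasi-homogeneous with continuous
quasi-homogeneous part `f_{α,k}`, then the desingularized vector field `g`
extends to a continuous map `G` on the closed disk `D̄ = {p ≤ 1}`, whose value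
on the horizon `E = {p = 1}` is
`Gᵢ(x) = (f_{α,k})ᵢ(x) − (αᵢxᵢ/c) ∑_{j∈I} βⱼaⱼ xⱼ^{2βⱼ−1} (f_{α,k})ⱼ(x)`. -/
theorem desing_extends_continuously_to_horizon
    {n : ℕ} (hn : 1 ≤ n) (α β : Fin n → ℕ) (a : Fin n → ℝ) (c : ℕ)
    (hα : ∃ i, 0 < α i) (hc : 0 < c)
    (hαβ : ∀ i, 0 < α i → α i * β i = c)
    (hβ0 : ∀ i, α i = 0 → β i = 0)
    (ha : ∀ i, 1 ≤ a i)
    (k : ℕ) (hk : 1 ≤ k)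
    (f fak : (Fin n → ℝ) → Fin n → ℝ)
    (hf : Continuous f) (hfak : Continuous fak)
    (haqh : IsAQH α k f fak) :
    ∃ G : (Fin n → ℝ) → Fin n → ℝ,
      ContinuousOn G {x : Fin n → ℝ | pF α β a c x ≤ 1} ∧
      (∀ x : Fin n → ℝ, pF α β a c x < 1 → G x = gDesing α β a c (k : ℤ) f x) ∧
      (∀ x : Fin n → ℝ, pF α β a c x = 1 → ∀ i : Fin n,
        G x i = fak x i - ((α i : ℝ) * x i / (c : ℝ)) *
          ∑ j ∈ univ.filter (fun l => 0 < α l),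
            (β j : ℝ) * a j * x j ^ (2 * β j - 1) * fak x j) := by
  classical
  have hβp := DesingAux.beta_pos α β c hc hαβ
  set FT := DesingAux.Ftil α β a c (k : ℤ) f fak with hFT
  refine ⟨fun x i => FT x i - ((α i : ℝ) * x i / (c : ℝ)) *
      ∑ j ∈ univ.filter (fun l => 0 < α l),
        (β j : ℝ) * a j * x j ^ (2 * β j - 1) * FT x j, ?_, ?_, ?_⟩
  · have hset : {x : Fin n → ℝ | pF α β a c x ≤ 1}
        = {x | DesingAux.sSum α β a x ≤ 1} :=
      Set.ext fun x => DesingAux.pF_le_one_iff α β a c hc ha x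
    rw [hset]
    have hFt : ContinuousOn FT {x | DesingAux.sSum α β a x ≤ 1} :=
      DesingAux.continuousOn_Ftil α β a c hc hβp ha k hk f fak hf hfak haqh
    have hFtj : ∀ j : Fin n, ContinuousOn (fun x => FT x j)
        {x | DesingAux.sSum α β a x ≤ 1} := fun j x hx =>
      ((continuous_apply j).continuousAt).comp_continuousWithinAt (hFt x hx)
    rw [continuousOn_pi]
    intro i
    refine (hFtj i).sub ?_
    refine ContinuousOn.mul (Continuous.continuousOn (by continuity)) ?_
    refine continuousOn_finset_sum _ fun j _ => ?_
    exact ContinuousOn.mul (Continuous.continuousOn (by continuity)) (hFtj j)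
  · intro x hx
    have hs : DesingAux.sSum α β a x < 1 :=
      (DesingAux.pF_lt_one_iff α β a c hc ha x).1 hx
    have hFx := DesingAux.Ftil_of_lt α β a c (k : ℤ) f fak hs
    funext i
    simp only [hFT, hFx]
    rfl
  · intro x hx i
    have hs : DesingAux.sSum α β a x = 1 :=
      (DesingAux.pF_eq_one_iff α β a c hc ha x).1 hx
    have hFx := DesingAux.Ftil_of_eq α β a c (k : ℤ) f fak hs
    simp only [hFT, hFx]
end

section
/- Let f : ℝⁿ → ℝⁿ, k ∈ ℤ, and let f̃, S, g be defined from f as in the context. If J ⊆ ℝ is an interval and x : J → D is differentiable with x'(τ) = g(x(τ)) for all τ ∈ J, then for all τ ∈ J the quantity 1 − p(x(τ))^{2c} satisfies the differential equation d/dτ [1 − p(x(τ))^{2c}] = −2 S(x(τ)) (1 − p(x(τ))^{2c}). -/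
open Finset

/-- Along any solution `x : J → D` of the desingularized system `x' = g(x)`,
the quantity `1 − p(x(τ))^{2c}` satisfies
`d/dτ [1 − p(x(τ))^{2c}] = −2 S(x(τ)) (1 − p(x(τ))^{2c})`. -/
theorem radial_quantity_ode
    {n : ℕ} (hn : 1 ≤ n) (α β : Fin n → ℕ) (a : Fin n → ℝ) (c : ℕ)
    (hα : ∃ i, 0 < α i) (hc : 0 < c)
    (hαβ : ∀ i, 0 < α i → α i * β i = c)
    (hβ0 : ∀ i, α i = 0 → β i = 0)
    (ha : ∀ i, 1 ≤ a i)
    (k : ℤ) (f : (Fin n → ℝ) → Fin n → ℝ)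
    (J : Set ℝ) (hJ : J.OrdConnected)
    (x : ℝ → Fin n → ℝ)
    (hxD : ∀ τ ∈ J, pF α β a c (x τ) < 1)
    (hx : ∀ τ ∈ J, HasDerivWithinAt x (gDesing α β a c k f (x τ)) J τ) :
    ∀ τ ∈ J, HasDerivWithinAt (fun σ => 1 - pF α β a c (x σ) ^ (2 * c))
      (-2 * SF α β a c k f (x τ) * (1 - pF α β a c (x τ) ^ (2 * c))) J τ := by
  have hc' : (c : ℝ) ≠ 0 := Nat.cast_ne_zero.mpr hc.ne'
  have hpow : ∀ y : Fin n → ℝ, pF α β a c y ^ (2 * c) =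
      ∑ i ∈ univ.filter (fun i => 0 < α i), a i * y i ^ (2 * β i) := by
    intro y
    set Q := ∑ i ∈ univ.filter (fun i => 0 < α i), a i * y i ^ (2 * β i) with hQ
    have hQ0 : 0 ≤ Q := by
      apply Finset.sum_nonneg
      intro i _
      exact mul_nonneg (le_trans zero_le_one (ha i))
        (Even.pow_nonneg (even_two_mul (β i)) _)
    have h1 : pF α β a c y ^ (2 * c) = (Q ^ ((1:ℝ)/(2*(c:ℝ)))) ^ ((2*c : ℕ) : ℝ) := by
      rw [Real.rpow_natCast]; rfl
    rw [h1, ← Real.rpow_mul hQ0]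
    have h2 : (1:ℝ)/(2*(c:ℝ)) * ((2*c : ℕ):ℝ) = 1 := by push_cast; field_simp
    rw [h2, Real.rpow_one]
  intro τ hτ
  simp only [hpow]
  -- component derivatives
  have hxi : ∀ i : Fin n, HasDerivWithinAt (fun σ => x σ i)
      (gDesing α β a c k f (x τ) i) J τ := by
    intro i
    exact (hasDerivWithinAt_pi.mp (hx τ hτ)) i
  set S := SF α β a c k f (x τ) with hS
  have hder : HasDerivWithinAt
      (fun σ => 1 - ∑ i ∈ univ.filter (fun i => 0 < α i), a i * x σ i ^ (2 * β i))
      (0 - ∑ i ∈ univ.filter (fun i => 0 < α i),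
        a i * ((2 * β i : ℕ) * x τ i ^ (2 * β i - 1) * gDesing α β a c k f (x τ) i))
      J τ := by
    apply (hasDerivWithinAt_const τ J (1:ℝ)).sub
    apply HasDerivWithinAt.fun_sum
    intro i _
    exact ((hxi i).pow (2 * β i)).const_mul (a i)
  convert hder using 1
  rw [zero_sub]
  have hterm : ∀ i ∈ univ.filter (fun i => 0 < (α i)),
      a i * ((2 * β i : ℕ) * x τ i ^ (2 * β i - 1) * gDesing α β a c k f (x τ) i)
      = 2 * ((β i : ℝ) * a i * x τ i ^ (2 * β i - 1) * fTil α β a c k f (x τ) i)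
        - 2 * S * (a i * x τ i ^ (2 * β i)) := by
    intro i hi
    rw [Finset.mem_filter] at hi
    have hβi : 0 < β i := by
      rcases Nat.eq_zero_or_pos (β i) with h | h
      · exfalso; have h3 := hαβ i hi.2; rw [h, Nat.mul_zero] at h3; omega
      · exact h
    have hx2 : x τ i ^ (2 * β i - 1) * x τ i = x τ i ^ (2 * β i) := by
      rw [← pow_succ]
      congr 1
      omega
    have hcast : (α i : ℝ) * (β i : ℝ) = (c : ℝ) := by
      exact_mod_cast congrArg Nat.cast (hαβ i hi.2)
    simp only [gDesing]
    push_cast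
    field_simp
    rw [← hcast, ← hx2]
    ring
  rw [Finset.sum_congr rfl hterm, Finset.sum_sub_distrib, ← Finset.mul_sum, ← Finset.mul_sum]
  have : (∑ i ∈ univ.filter (fun i => 0 < α i),
      (β i : ℝ) * a i * x τ i ^ (2 * β i - 1) * fTil α β a c k f (x τ) i) = S := rfl
  rw [this]
  ring
end

section
/- Let x : [0,∞) → D be continuous and suppose there are constants c₁, c₂, ℓ > 0 with c₁ e^{−ℓτ} ≤ 1 − p(x(τ))^{2c} ≤ c₂ e^{−ℓτ} for all τ ≥ 0. Set y(τ) = T⁻¹(x(τ)), t(τ) = ∫₀^τ κ(y(σ))^{−k} dσ, and t_max = ∫₀^∞ κ(y(σ))^{−k} dσ (which is finite). Then the blow-up rate is p(y(t)) ∼ (t_max − t)^{−1/k}: there exist constants C₁, C₂ > 0 and τ₀ ≥ 0 such that for all τ ≥ τ₀, C₁ (t_max − t(τ))^{−1/k} ≤ p(y(τ)) ≤ C₂ (t_max − t(τ))^{−1/k}. -/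
open Finset

lemma rpow_two_c {c : ℕ} (hc : 0 < c) {s : ℝ} (hs : 0 ≤ s) :
    (s ^ ((1:ℝ) / (2 * (c:ℝ)))) ^ (2 * c) = s := by
  have hc' : (c:ℝ) ≠ 0 := Nat.cast_ne_zero.mpr hc.ne'
  rw [← Real.rpow_natCast (s ^ ((1:ℝ)/(2*(c:ℝ)))) (2*c), ← Real.rpow_mul hs,
    show (1:ℝ)/(2*(c:ℝ)) * ((2*c : ℕ) : ℝ) = 1 by push_cast; field_simp]
  exact Real.rpow_one s

lemma integral_exp_neg_mul_Ioi' {m : ℝ} (hm : 0 < m) (τ : ℝ) :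
    ∫ σ in Set.Ioi τ, Real.exp (-(m * σ)) = Real.exp (-(m * τ)) / m := by
  have hder : ∀ σ ∈ Set.Ici τ, HasDerivAt (fun σ : ℝ => -Real.exp (-(m * σ)) / m)
      (Real.exp (-(m * σ))) σ := by
    intro σ _
    have h1 : HasDerivAt (fun σ : ℝ => -(m * σ)) (-m) σ := by
      have := ((hasDerivAt_id σ).const_mul m).neg; simp only [mul_one] at this; exact this
    have h2 := (h1.exp).neg.div_const m
    rw [mul_neg, neg_neg, mul_div_assoc, div_self hm.ne', mul_one] at h2
    exact h2
  have hint : MeasureTheory.IntegrableOn (fun σ : ℝ => Real.exp (-(m * σ))) (Set.Ioi τ) := by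
    simpa [neg_mul] using exp_neg_integrableOn_Ioi τ hm
  have htend : Filter.Tendsto (fun σ : ℝ => -Real.exp (-(m * σ)) / m) Filter.atTop (nhds 0) := by
    have h1 : Filter.Tendsto (fun σ : ℝ => -(m * σ)) Filter.atTop Filter.atBot := by
      have h0 : Filter.Tendsto (fun σ : ℝ => m * σ) Filter.atTop Filter.atTop :=
        Filter.Tendsto.const_mul_atTop hm Filter.tendsto_id
      simpa [Function.comp_def] using Filter.tendsto_neg_atTop_atBot.comp h0
    have := ((Real.tendsto_exp_atBot.comp h1).neg).div_const m
    simpa using this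
  have h := MeasureTheory.integral_Ioi_of_hasDerivAt_of_tendsto' hder hint htend
  rw [h]; ring

lemma kF_zpow_eq {c k : ℕ} (hc : 0 < c) {K D : ℝ} (hD : 0 < D)
    (hK : K = (D⁻¹) ^ ((1:ℝ)/(2*(c:ℝ)))) :
    K ^ (-(k:ℤ)) = D ^ ((k:ℝ)/(2*(c:ℝ))) := by
  subst hK
  rw [Real.inv_rpow hD.le, ← Real.rpow_neg hD.le,
    ← Real.rpow_intCast (D ^ (-((1:ℝ)/(2*(c:ℝ))))) (-(k:ℤ)), ← Real.rpow_mul hD.le]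
  congr 1
  push_cast
  ring

/-- If `c₁ e^{−ℓτ} ≤ 1 − p(x(τ))^{2c} ≤ c₂ e^{−ℓτ}` along a trajectory
`x : [0,∞) → D`, then with `y = T⁻¹ ∘ x`, `t(τ) = ∫₀^τ κ(y)^{−k}` and
`t_max = ∫₀^∞ κ(y)^{−k}` (finite), we have the blow-up rate
`p(y(t)) ∼ (t_max − t)^{−1/k}`: there are `C₁, C₂ > 0` and `τ₀ ≥ 0` with
`C₁ (t_max − t(τ))^{−1/k} ≤ p(y(τ)) ≤ C₂ (t_max − t(τ))^{−1/k}` for `τ ≥ τ₀`. -/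
theorem blowup_rate
    {n : ℕ} (hn : 1 ≤ n) (α β : Fin n → ℕ) (a : Fin n → ℝ) (c : ℕ)
    (hα : ∃ i, 0 < α i) (hc : 0 < c)
    (hαβ : ∀ i, 0 < α i → α i * β i = c)
    (hβ0 : ∀ i, α i = 0 → β i = 0)
    (ha : ∀ i, 1 ≤ a i)
    (k : ℕ) (hk : 1 ≤ k)
    (x : ℝ → Fin n → ℝ) (hxc : ContinuousOn x (Set.Ici 0))
    (hxD : ∀ τ : ℝ, 0 ≤ τ → pF α β a c (x τ) < 1)
    (c₁ c₂ ℓ : ℝ) (hc₁ : 0 < c₁) (hc₂ : 0 < c₂) (hℓ : 0 < ℓ)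
    (hlow : ∀ τ : ℝ, 0 ≤ τ →
      c₁ * Real.exp (-ℓ * τ) ≤ 1 - pF α β a c (x τ) ^ (2 * c))
    (hupp : ∀ τ : ℝ, 0 ≤ τ →
      1 - pF α β a c (x τ) ^ (2 * c) ≤ c₂ * Real.exp (-ℓ * τ))
    (y : ℝ → Fin n → ℝ)
    (hy : ∀ τ : ℝ, 0 ≤ τ → TqP α β a c (y τ) = x τ) :
    MeasureTheory.IntegrableOn
      (fun σ : ℝ => (kF α β a c (y σ)) ^ (-(k : ℤ))) (Set.Ici 0) ∧
    ∃ C₁ C₂ τ₀ : ℝ, 0 < C₁ ∧ 0 < C₂ ∧ 0 ≤ τ₀ ∧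
      ∀ τ : ℝ, τ₀ ≤ τ →
        C₁ * ((∫ σ in Set.Ioi (0 : ℝ), (kF α β a c (y σ)) ^ (-(k : ℤ))) -
              ∫ σ in (0 : ℝ)..τ, (kF α β a c (y σ)) ^ (-(k : ℤ)))
            ^ (-(1 : ℝ) / (k : ℝ)) ≤ pF α β a c (y τ) ∧
        pF α β a c (y τ) ≤
          C₂ * ((∫ σ in Set.Ioi (0 : ℝ), (kF α β a c (y σ)) ^ (-(k : ℤ))) -
                ∫ σ in (0 : ℝ)..τ, (kF α β a c (y σ)) ^ (-(k : ℤ)))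
              ^ (-(1 : ℝ) / (k : ℝ)) := by
  have hcR : (0:ℝ) < (c:ℝ) := by exact_mod_cast hc
  have hkR : (0:ℝ) < (k:ℝ) := by exact_mod_cast hk
  set ρ : ℝ := (1:ℝ) / (2 * (c:ℝ)) with hρdef
  have hρpos : 0 < ρ := by rw [hρdef]; positivity
  set r : ℝ := (k:ℝ) / (2 * (c:ℝ)) with hrdef
  have hrpos : 0 < r := by rw [hrdef]; positivity
  have hrρ : r = (k:ℝ) * ρ := by rw [hrdef, hρdef]; ring
  set m : ℝ := ℓ * r with hmdef
  have hmpos : 0 < m := by positivity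
  -- the two sums
  set S : ℝ → ℝ := fun τ => ∑ i ∈ univ.filter (fun i => 0 < α i), a i * x τ i ^ (2 * β i)
    with hSdef
  set Sy : ℝ → ℝ := fun τ => ∑ i ∈ univ.filter (fun i => 0 < α i), a i * y τ i ^ (2 * β i)
    with hSydef
  have hS0 : ∀ τ, 0 ≤ S τ := fun τ => Finset.sum_nonneg fun i _ =>
    mul_nonneg (zero_le_one.trans (ha i)) ((even_two_mul (β i)).pow_nonneg _)
  have hSy0 : ∀ τ, 0 ≤ Sy τ := fun τ => Finset.sum_nonneg fun i _ =>
    mul_nonneg (zero_le_one.trans (ha i)) ((even_two_mul (β i)).pow_nonneg _)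
  have hpxS : ∀ τ, pF α β a c (x τ) = S τ ^ ρ := fun τ => by
    simp only [pF, hSdef, hρdef]
  have hpyS : ∀ τ, pF α β a c (y τ) = Sy τ ^ ρ := fun τ => by
    simp only [pF, hSydef, hρdef]
  have hpx : ∀ τ, pF α β a c (x τ) ^ (2*c) = S τ := by
    intro τ; rw [hpxS τ, hρdef]; exact rpow_two_c hc (hS0 τ)
  have hpy : ∀ τ, pF α β a c (y τ) ^ (2*c) = Sy τ := by
    intro τ; rw [hpyS τ, hρdef]; exact rpow_two_c hc (hSy0 τ)
  have hkFy : ∀ τ, kF α β a c (y τ) = (1 + Sy τ) ^ ρ := by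
    intro τ; rw [kF, hpy τ, hρdef]
  have hkp : ∀ τ, kF α β a c (y τ) ^ (2*c) = 1 + Sy τ := by
    intro τ
    rw [hkFy τ, hρdef]
    exact rpow_two_c hc (by linarith [hSy0 τ])
  -- key algebraic identity coming from `hy`
  have hkey : ∀ τ, 0 ≤ τ → S τ * (1 + Sy τ) = Sy τ := by
    intro τ hτ
    have hxi : ∀ i, x τ i = y τ i / kF α β a c (y τ) ^ (α i) := by
      intro i; rw [← hy τ hτ]; rfl
    have h1Sy : (0:ℝ) < 1 + Sy τ := by linarith [hSy0 τ]
    have hterm : ∀ i ∈ univ.filter (fun i : Fin n => 0 < α i),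
        a i * x τ i ^ (2 * β i) * (1 + Sy τ) = a i * y τ i ^ (2 * β i) := by
      intro i hi
      have hαi : 0 < α i := by simpa using (Finset.mem_filter.mp hi).2
      have hκ : (kF α β a c (y τ) ^ (α i)) ^ (2 * β i) = 1 + Sy τ := by
        rw [← pow_mul, show α i * (2 * β i) = 2 * c by rw [← hαβ i hαi]; ring]
        exact hkp τ
      rw [hxi i, div_pow, hκ]
      field_simp
    calc S τ * (1 + Sy τ)
        = ∑ i ∈ univ.filter (fun i : Fin n => 0 < α i),
            a i * x τ i ^ (2 * β i) * (1 + Sy τ) := by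
          rw [hSdef]; exact Finset.sum_mul _ _ _
      _ = Sy τ := by rw [Finset.sum_congr rfl hterm, hSydef]
  have hS1 : ∀ τ, 0 ≤ τ → S τ < 1 := by
    intro τ hτ
    rw [← hpx τ]
    exact pow_lt_one₀ (by rw [hpxS τ]; exact Real.rpow_nonneg (hS0 τ) _) (hxD τ hτ)
      (by positivity)
  have hlow' : ∀ τ, 0 ≤ τ → c₁ * Real.exp (-(ℓ * τ)) ≤ 1 - S τ := by
    intro τ hτ; have h := hlow τ hτ; rw [hpx τ] at h; rwa [← neg_mul]
  have hupp' : ∀ τ, 0 ≤ τ → 1 - S τ ≤ c₂ * Real.exp (-(ℓ * τ)) := by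
    intro τ hτ; have h := hupp τ hτ; rw [hpx τ] at h; rwa [← neg_mul]
  have hDpos : ∀ τ, 0 ≤ τ → 0 < 1 - S τ := fun τ hτ =>
    lt_of_lt_of_le (by positivity) (hlow' τ hτ)
  have hSyD : ∀ τ, 0 ≤ τ → Sy τ * (1 - S τ) = S τ := by
    intro τ hτ; linear_combination (-1 : ℝ) * hkey τ hτ
  have hSy_eq : ∀ τ, 0 ≤ τ → Sy τ = S τ / (1 - S τ) := by
    intro τ hτ
    have hD := hDpos τ hτ
    field_simp
    linear_combination hSyD τ hτ
  -- the integrand f equals g on [0, ∞)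
  set f : ℝ → ℝ := fun σ => kF α β a c (y σ) ^ (-(k:ℤ)) with hfdef
  set g : ℝ → ℝ := fun σ => (1 - S σ) ^ r with hgdef
  have hfg : Set.EqOn f g (Set.Ici 0) := by
    intro σ hσ
    have hD := hDpos σ hσ
    have h1Sy := hSy_eq σ hσ
    show kF α β a c (y σ) ^ (-(k:ℤ)) = (1 - S σ) ^ r
    rw [hrdef]
    refine kF_zpow_eq hc hD ?_
    rw [hkFy σ, hρdef]
    congr 1
    rw [h1Sy]
    field_simp
    ring
  -- continuity of g on [0,∞)
  have hScont : ContinuousOn S (Set.Ici 0) := by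
    rw [hSdef]
    apply continuousOn_finset_sum
    intro i _
    exact continuousOn_const.mul (((continuous_apply i).comp_continuousOn hxc).pow _)
  have hgcont : ContinuousOn g (Set.Ici 0) := by
    rw [hgdef]
    exact (continuousOn_const.sub hScont).rpow_const (fun τ _ => Or.inr hrpos.le)
  have hg0 : ∀ σ, 0 ≤ σ → 0 ≤ g σ := fun σ hσ => Real.rpow_nonneg (hDpos σ hσ).le _
  -- pointwise exponential bounds for g on [0,∞)
  have hgle : ∀ σ, 0 ≤ σ → g σ ≤ c₂ ^ r * Real.exp (-(m * σ)) := by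
    intro σ hσ
    have h1 : g σ ≤ (c₂ * Real.exp (-(ℓ * σ))) ^ r :=
      Real.rpow_le_rpow (hDpos σ hσ).le (hupp' σ hσ) hrpos.le
    refine h1.trans (le_of_eq ?_)
    rw [Real.mul_rpow hc₂.le (Real.exp_pos _).le, ← Real.exp_mul]
    congr 2
    rw [hmdef]; ring
  have hgge : ∀ σ, 0 ≤ σ → c₁ ^ r * Real.exp (-(m * σ)) ≤ g σ := by
    intro σ hσ
    have h1 : (c₁ * Real.exp (-(ℓ * σ))) ^ r ≤ g σ :=
      Real.rpow_le_rpow (by positivity) (hlow' σ hσ) hrpos.le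
    refine le_trans (le_of_eq ?_) h1
    rw [Real.mul_rpow hc₁.le (Real.exp_pos _).le, ← Real.exp_mul]
    congr 2
    rw [hmdef]; ring
  -- integrability
  have hexpint : ∀ (d τ' : ℝ),
      MeasureTheory.IntegrableOn (fun σ : ℝ => d * Real.exp (-(m * σ))) (Set.Ioi τ') := by
    intro d τ'
    have h := (exp_neg_integrableOn_Ioi τ' hmpos).const_mul d
    have h2 : MeasureTheory.IntegrableOn (fun σ : ℝ => d * Real.exp (-m * σ)) (Set.Ioi τ') := h
    simpa [neg_mul] using h2
  have hgint : ∀ τ', 0 ≤ τ' → MeasureTheory.IntegrableOn g (Set.Ioi τ') := by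
    intro τ' hτ'
    apply MeasureTheory.Integrable.mono' (hexpint (c₂ ^ r) τ')
    · exact ((hgcont.mono (fun σ (hσ : σ ∈ Set.Ioi τ') => hτ'.trans hσ.le)).aestronglyMeasurable
        measurableSet_Ioi)
    · rw [MeasureTheory.ae_restrict_iff' measurableSet_Ioi]
      filter_upwards with σ hσ
      have hσ0 : (0:ℝ) ≤ σ := hτ'.trans hσ.le
      rw [Real.norm_eq_abs, abs_of_nonneg (hg0 σ hσ0)]
      exact hgle σ hσ0
  have hfint : MeasureTheory.IntegrableOn f (Set.Ici 0) := by
    rw [integrableOn_Ici_iff_integrableOn_Ioi]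
    exact (hgint 0 le_rfl).congr_fun (fun σ hσ => (hfg (show (0:ℝ) ≤ σ from le_of_lt hσ)).symm) measurableSet_Ioi
  have hfint' : ∀ τ', 0 ≤ τ' → MeasureTheory.IntegrableOn f (Set.Ioi τ') :=
    fun τ' hτ' => hfint.mono_set (fun σ hσ => (hτ'.trans hσ.le : (0:ℝ) ≤ σ))
  -- splitting the integral
  have hsplit : ∀ τ, 0 ≤ τ → (∫ σ in Set.Ioi (0:ℝ), f σ) - (∫ σ in (0:ℝ)..τ, f σ)
      = ∫ σ in Set.Ioi τ, f σ := by
    intro τ hτ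
    rw [intervalIntegral.integral_of_le hτ, ← Set.Ioc_union_Ioi_eq_Ioi hτ,
      MeasureTheory.setIntegral_union (Set.Ioc_disjoint_Ioi le_rfl) measurableSet_Ioi
        (hfint.mono_set (fun σ hσ => hσ.1.le)) (hfint' τ hτ)]
    ring
  have hremeq : ∀ τ, 0 ≤ τ → (∫ σ in Set.Ioi τ, f σ) = ∫ σ in Set.Ioi τ, g σ :=
    fun τ hτ => MeasureTheory.setIntegral_congr_fun measurableSet_Ioi
      (fun σ hσ => hfg (hτ.trans (le_of_lt hσ)))
  have hexpval : ∀ (d τ' : ℝ), (∫ σ in Set.Ioi τ', d * Real.exp (-(m * σ)))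
      = d * (Real.exp (-(m * τ')) / m) := by
    intro d τ'
    rw [MeasureTheory.integral_const_mul, integral_exp_neg_mul_Ioi' hmpos]
  have hrem_lb : ∀ τ, 0 ≤ τ →
      c₁ ^ r * (Real.exp (-(m * τ)) / m) ≤ ∫ σ in Set.Ioi τ, g σ := by
    intro τ hτ
    rw [← hexpval (c₁ ^ r) τ]
    exact MeasureTheory.setIntegral_mono_on (hexpint _ τ) (hgint τ hτ) measurableSet_Ioi
      (fun σ hσ => hgge σ (hτ.trans (le_of_lt hσ)))
  have hrem_ub : ∀ τ, 0 ≤ τ →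
      (∫ σ in Set.Ioi τ, g σ) ≤ c₂ ^ r * (Real.exp (-(m * τ)) / m) := by
    intro τ hτ
    rw [← hexpval (c₂ ^ r) τ]
    exact MeasureTheory.setIntegral_mono_on (hgint τ hτ) (hexpint _ τ) measurableSet_Ioi
      (fun σ hσ => hgle σ (hτ.trans (le_of_lt hσ)))
  -- bounds for the remainder raised to the power -1/k
  have hexpo : ∀ τ : ℝ, (-(m * τ)) * (-(1:ℝ)/(k:ℝ)) = ℓ * τ * ρ := by
    intro τ
    rw [hmdef, hrρ]
    field_simp
  have hpowval : ∀ (d : ℝ), 0 < d → ∀ τ : ℝ,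
      (d * (Real.exp (-(m * τ)) / m)) ^ (-(1:ℝ)/(k:ℝ))
        = (d / m) ^ (-(1:ℝ)/(k:ℝ)) * Real.exp (ℓ * τ * ρ) := by
    intro d hd τ
    rw [show d * (Real.exp (-(m * τ)) / m) = (d / m) * Real.exp (-(m * τ)) by ring,
      Real.mul_rpow (by positivity) (Real.exp_pos _).le, ← Real.exp_mul, hexpo τ]
  have hnegk : -(1:ℝ)/(k:ℝ) ≤ 0 := by
    rw [neg_div]
    exact neg_nonpos.mpr (div_nonneg zero_le_one hkR.le)
  have hrem_pow_ub : ∀ τ, 0 ≤ τ →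
      ((∫ σ in Set.Ioi (0:ℝ), f σ) - ∫ σ in (0:ℝ)..τ, f σ) ^ (-(1:ℝ)/(k:ℝ))
        ≤ (c₁ ^ r / m) ^ (-(1:ℝ)/(k:ℝ)) * Real.exp (ℓ * τ * ρ) := by
    intro τ hτ
    rw [hsplit τ hτ, hremeq τ hτ, ← hpowval (c₁ ^ r) (by positivity) τ]
    exact Real.rpow_le_rpow_of_nonpos (by positivity) (hrem_lb τ hτ)
      hnegk
  have hrem_pow_lb : ∀ τ, 0 ≤ τ →
      (c₂ ^ r / m) ^ (-(1:ℝ)/(k:ℝ)) * Real.exp (ℓ * τ * ρ)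
        ≤ ((∫ σ in Set.Ioi (0:ℝ), f σ) - ∫ σ in (0:ℝ)..τ, f σ) ^ (-(1:ℝ)/(k:ℝ)) := by
    intro τ hτ
    rw [hsplit τ hτ, hremeq τ hτ, ← hpowval (c₂ ^ r) (by positivity) τ]
    have hpos : 0 < ∫ σ in Set.Ioi τ, g σ :=
      lt_of_lt_of_le (by positivity) (hrem_lb τ hτ)
    exact Real.rpow_le_rpow_of_nonpos hpos (hrem_ub τ hτ)
      hnegk
  -- bounds for pF (y τ)
  set τ₀ : ℝ := max 0 (Real.log (2*c₂) / ℓ) with hτ₀def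
  have hτ₀0 : (0:ℝ) ≤ τ₀ := le_max_left _ _
  have hhalf : ∀ τ, τ₀ ≤ τ → c₂ * Real.exp (-(ℓ * τ)) ≤ 1/2 := by
    intro τ hτ
    have h0 : Real.log (2*c₂) / ℓ ≤ τ := (le_max_right _ _).trans hτ
    have h1 : Real.log (2*c₂) ≤ ℓ * τ := by
      rw [div_le_iff₀ hℓ] at h0
      linarith [h0]
    have h2 : Real.exp (-(ℓ*τ)) ≤ (2*c₂)⁻¹ := by
      rw [← Real.exp_log (show (0:ℝ) < (2*c₂)⁻¹ by positivity), Real.exp_le_exp,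
        Real.log_inv]
      linarith
    calc c₂ * Real.exp (-(ℓ*τ)) ≤ c₂ * (2*c₂)⁻¹ :=
          mul_le_mul_of_nonneg_left h2 hc₂.le
      _ = 1/2 := by field_simp
  have hpFlb : ∀ τ, τ₀ ≤ τ →
      ((2*c₂)⁻¹) ^ ρ * Real.exp (ℓ * τ * ρ) ≤ pF α β a c (y τ) := by
    intro τ hτ
    have hτ0 : (0:ℝ) ≤ τ := hτ₀0.trans hτ
    have hD := hDpos τ hτ0
    have hShalf : (1/2 : ℝ) ≤ S τ := by
      have h1 := hupp' τ hτ0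
      have h2 := hhalf τ hτ
      linarith
    have hSylb : (2*c₂)⁻¹ * Real.exp (ℓ * τ) ≤ Sy τ := by
      rw [hSy_eq τ hτ0]
      have h2 : (1/2 : ℝ) / (c₂ * Real.exp (-(ℓ*τ))) ≤ S τ / (1 - S τ) :=
        div_le_div₀ (hS0 τ) hShalf hD (hupp' τ hτ0)
      refine le_trans (le_of_eq ?_) h2
      rw [Real.exp_neg]
      have hE := Real.exp_pos (ℓ * τ)
      field_simp
    rw [hpyS τ]
    calc ((2*c₂)⁻¹) ^ ρ * Real.exp (ℓ*τ*ρ)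
        = ((2*c₂)⁻¹ * Real.exp (ℓ*τ)) ^ ρ := by
          rw [Real.mul_rpow (by positivity) (Real.exp_pos _).le, ← Real.exp_mul]
      _ ≤ Sy τ ^ ρ := Real.rpow_le_rpow (by positivity) hSylb hρpos.le
  have hpFub : ∀ τ, 0 ≤ τ →
      pF α β a c (y τ) ≤ (c₁⁻¹) ^ ρ * Real.exp (ℓ * τ * ρ) := by
    intro τ hτ0
    have hD := hDpos τ hτ0
    have hSyub : Sy τ ≤ c₁⁻¹ * Real.exp (ℓ * τ) := by
      rw [hSy_eq τ hτ0]
      have h1 : S τ / (1 - S τ) ≤ 1 / (c₁ * Real.exp (-(ℓ*τ))) :=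
        div_le_div₀ zero_le_one (hS1 τ hτ0).le (by positivity) (hlow' τ hτ0)
      refine h1.trans (le_of_eq ?_)
      rw [Real.exp_neg]
      have hE := Real.exp_pos (ℓ * τ)
      field_simp
    rw [hpyS τ]
    calc Sy τ ^ ρ ≤ (c₁⁻¹ * Real.exp (ℓ*τ)) ^ ρ :=
          Real.rpow_le_rpow (hSy0 τ) hSyub hρpos.le
      _ = (c₁⁻¹) ^ ρ * Real.exp (ℓ*τ*ρ) := by
          rw [Real.mul_rpow (by positivity) (Real.exp_pos _).le, ← Real.exp_mul]
  -- assemble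
  have hP1 : (0:ℝ) < (c₁ ^ r / m) ^ (-(1:ℝ)/(k:ℝ)) :=
    Real.rpow_pos_of_pos (by positivity) _
  have hP2 : (0:ℝ) < (c₂ ^ r / m) ^ (-(1:ℝ)/(k:ℝ)) :=
    Real.rpow_pos_of_pos (by positivity) _
  have hK1 : (0:ℝ) < ((2*c₂)⁻¹) ^ ρ := Real.rpow_pos_of_pos (by positivity) _
  have hK2 : (0:ℝ) < (c₁⁻¹) ^ ρ := Real.rpow_pos_of_pos (by positivity) _
  refine ⟨hfint, ((2*c₂)⁻¹) ^ ρ / ((c₁ ^ r / m) ^ (-(1:ℝ)/(k:ℝ))),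
    (c₁⁻¹) ^ ρ / ((c₂ ^ r / m) ^ (-(1:ℝ)/(k:ℝ))), τ₀,
    div_pos hK1 hP1, div_pos hK2 hP2, hτ₀0, ?_⟩
  intro τ hτ
  have hτ0 : (0:ℝ) ≤ τ := hτ₀0.trans hτ
  constructor
  · calc ((2*c₂)⁻¹) ^ ρ / ((c₁ ^ r / m) ^ (-(1:ℝ)/(k:ℝ))) *
        ((∫ σ in Set.Ioi (0:ℝ), f σ) - ∫ σ in (0:ℝ)..τ, f σ) ^ (-(1:ℝ)/(k:ℝ))
        ≤ ((2*c₂)⁻¹) ^ ρ / ((c₁ ^ r / m) ^ (-(1:ℝ)/(k:ℝ))) *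
          ((c₁ ^ r / m) ^ (-(1:ℝ)/(k:ℝ)) * Real.exp (ℓ * τ * ρ)) :=
          mul_le_mul_of_nonneg_left (hrem_pow_ub τ hτ0) (div_pos hK1 hP1).le
      _ = ((2*c₂)⁻¹) ^ ρ * Real.exp (ℓ * τ * ρ) := by
          field_simp
      _ ≤ pF α β a c (y τ) := hpFlb τ hτ
  · calc pF α β a c (y τ) ≤ (c₁⁻¹) ^ ρ * Real.exp (ℓ * τ * ρ) := hpFub τ hτ0
      _ = (c₁⁻¹) ^ ρ / ((c₂ ^ r / m) ^ (-(1:ℝ)/(k:ℝ))) *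
          ((c₂ ^ r / m) ^ (-(1:ℝ)/(k:ℝ)) * Real.exp (ℓ * τ * ρ)) := by
          field_simp
      _ ≤ (c₁⁻¹) ^ ρ / ((c₂ ^ r / m) ^ (-(1:ℝ)/(k:ℝ))) *
          ((∫ σ in Set.Ioi (0:ℝ), f σ) - ∫ σ in (0:ℝ)..τ, f σ) ^ (-(1:ℝ)/(k:ℝ)) :=
          mul_le_mul_of_nonneg_left (hrem_pow_lb τ hτ0) (div_pos hK2 hP2).le
end

section
/- Fix an integer n ≥ 1, ε ∈ ℝ with ε ≠ 0, and real numbers a₀,…,a_{2n} and b₀,…,b_{n−1}. The Liénard vector field f : ℝ² → ℝ², f(x,y) = ( y, −(ε x^{2n+1} + ∑_{k=0}^{2n} aₖ xᵏ) − y (xⁿ + ∑_{k=0}^{n−1} bₖ xᵏ) ), is asymptotically quasi-homogeneous of type (1, n+1) and order n+1 at infinity, with quasi-homogeneous part f_{α,n}(x,y) = ( y, −ε x^{2n+1} − xⁿ y ). -/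
open Finset

/-- The polynomial Liénard vector field
`f(x,y) = (y, −(ε x^{2n+1} + ∑_{k=0}^{2n} aₖxᵏ) − y(xⁿ + ∑_{k=0}^{n−1} bₖxᵏ))`. -/
noncomputable def lienardF (n : ℕ) (ε : ℝ) (a b : ℕ → ℝ) : ℝ × ℝ → ℝ × ℝ :=
  fun p =>
    (p.2,
      -(ε * p.1 ^ (2 * n + 1) + ∑ k ∈ Finset.range (2 * n + 1), a k * p.1 ^ k) -
        p.2 * (p.1 ^ n + ∑ k ∈ Finset.range n, b k * p.1 ^ k))

/-- The quasi-homogeneous part `f_{α,n}(x,y) = (y, −ε x^{2n+1} − xⁿ y)`. -/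
noncomputable def lienardQHpart (n : ℕ) (ε : ℝ) : ℝ × ℝ → ℝ × ℝ :=
  fun p => (p.2, -ε * p.1 ^ (2 * n + 1) - p.1 ^ n * p.2)

lemma lienard_sum_bound (m : ℕ) (c : ℕ → ℝ) (R x : ℝ) (hR : 1 ≤ R) (hx : |x| ≤ 1) :
    |∑ k ∈ Finset.range m, c k * (R * x) ^ k| ≤
      (∑ k ∈ Finset.range m, |c k|) * R ^ (m - 1) := by
  have hR0 : (0:ℝ) ≤ R := le_trans zero_le_one hR
  calc |∑ k ∈ Finset.range m, c k * (R * x) ^ k|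
      ≤ ∑ k ∈ Finset.range m, |c k * (R * x) ^ k| := Finset.abs_sum_le_sum_abs _ _
    _ ≤ ∑ k ∈ Finset.range m, |c k| * R ^ (m - 1) := by
        apply Finset.sum_le_sum
        intro k hk
        rw [abs_mul]
        apply mul_le_mul_of_nonneg_left _ (abs_nonneg _)
        have h1 : |(R * x) ^ k| ≤ R ^ k := by
          rw [abs_pow]
          apply pow_le_pow_left₀ (abs_nonneg _)
          rw [abs_mul, abs_of_nonneg hR0]
          nlinarith [abs_nonneg x]
        have h2 : R ^ k ≤ R ^ (m - 1) :=
          pow_le_pow_right₀ hR (by simp at hk; omega)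
        exact le_trans h1 h2
    _ = (∑ k ∈ Finset.range m, |c k|) * R ^ (m - 1) := (Finset.sum_mul _ _ _).symm

/-- The Liénard vector field is asymptotically quasi-homogeneous of type
`(1, n+1)` and order `n+1` at infinity (`k = n`, `I = {1,2}`), with
quasi-homogeneous part `(y, −ε x^{2n+1} − xⁿy)`: the part satisfies the
quasi-homogeneity identities of orders `k+α₁ = n+1` and `k+α₂ = 2n+1`, and the
renormalized differences tend to `0` as `R → +∞`, uniformly on the unit
sphere `x² + y² = 1`. -/
theorem lienard_asymptotically_quasiHomogeneous
    (n : ℕ) (hn : 1 ≤ n) (ε : ℝ) (hε : ε ≠ 0) (a b : ℕ → ℝ) :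
    (∀ x y R : ℝ,
      lienardQHpart n ε (R * x, R ^ (n + 1) * y) =
        (R ^ (n + 1) * (lienardQHpart n ε (x, y)).1,
         R ^ (2 * n + 1) * (lienardQHpart n ε (x, y)).2)) ∧
    (∀ δ : ℝ, 0 < δ → ∃ R₀ : ℝ, ∀ R : ℝ, R₀ ≤ R → ∀ x y : ℝ,
      x ^ 2 + y ^ 2 = 1 →
      |R ^ (-(n + 1 : ℤ)) *
        ((lienardF n ε a b (R * x, R ^ (n + 1) * y)).1 -
          R ^ (n + 1) * (lienardQHpart n ε (x, y)).1)| < δ ∧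
      |R ^ (-(2 * n + 1 : ℤ)) *
        ((lienardF n ε a b (R * x, R ^ (n + 1) * y)).2 -
          R ^ (2 * n + 1) * (lienardQHpart n ε (x, y)).2)| < δ) := by
  constructor
  · intro x y R
    simp only [lienardQHpart, Prod.mk.injEq]
    exact ⟨trivial, by ring⟩
  · intro δ hδ
    set A := ∑ k ∈ Finset.range (2 * n + 1), |a k| with hA
    set B := ∑ k ∈ Finset.range n, |b k| with hB
    have hA0 : 0 ≤ A := Finset.sum_nonneg fun _ _ => abs_nonneg _
    have hB0 : 0 ≤ B := Finset.sum_nonneg fun _ _ => abs_nonneg _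
    set C := A + B with hCdef
    have hC0 : 0 ≤ C := add_nonneg hA0 hB0
    refine ⟨max 1 (C / δ + 1), ?_⟩
    intro R hR x y hxy
    have hR1 : (1:ℝ) ≤ R := le_trans (le_max_left _ _) hR
    have hR0 : (0:ℝ) < R := lt_of_lt_of_le one_pos hR1
    have hx : |x| ≤ 1 := by nlinarith [sq_abs x, sq_abs y, abs_nonneg x, sq_nonneg y]
    have hy : |y| ≤ 1 := by nlinarith [sq_abs x, sq_abs y, abs_nonneg y, sq_nonneg x]
    constructor
    · have h1 : (lienardF n ε a b (R * x, R ^ (n + 1) * y)).1 -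
          R ^ (n + 1) * (lienardQHpart n ε (x, y)).1 = 0 := by
        simp [lienardF, lienardQHpart]
      rw [h1, mul_zero, abs_zero]
      exact hδ
    · have hdiff : (lienardF n ε a b (R * x, R ^ (n + 1) * y)).2 -
          R ^ (2 * n + 1) * (lienardQHpart n ε (x, y)).2 =
          -(∑ k ∈ Finset.range (2 * n + 1), a k * (R * x) ^ k) -
            R ^ (n + 1) * y * (∑ k ∈ Finset.range n, b k * (R * x) ^ k) := by
        simp only [lienardF, lienardQHpart]
        ring
      rw [hdiff]
      have hzpow : (R : ℝ) ^ (-(2 * n + 1 : ℤ)) = (R ^ (2 * n + 1))⁻¹ := by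
        rw [show (-(2 * n + 1 : ℤ)) = -((2 * n + 1 : ℕ) : ℤ) by push_cast; ring,
          zpow_neg, zpow_natCast]
      rw [hzpow, abs_mul, abs_inv, abs_pow, abs_of_pos hR0]
      -- bound the difference
      have hbound : |-(∑ k ∈ Finset.range (2 * n + 1), a k * (R * x) ^ k) -
            R ^ (n + 1) * y * (∑ k ∈ Finset.range n, b k * (R * x) ^ k)| ≤
          C * R ^ (2 * n) := by
        have ha' := lienard_sum_bound (2 * n + 1) a R x hR1 hx
        have hb' := lienard_sum_bound n b R x hR1 hx
        have hpow : R ^ (n + 1) * R ^ (n - 1) = R ^ (2 * n) := by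
          rw [← pow_add]
          congr 1
          omega
        calc |-(∑ k ∈ Finset.range (2 * n + 1), a k * (R * x) ^ k) -
              R ^ (n + 1) * y * (∑ k ∈ Finset.range n, b k * (R * x) ^ k)|
            ≤ |∑ k ∈ Finset.range (2 * n + 1), a k * (R * x) ^ k| +
              |R ^ (n + 1) * y * (∑ k ∈ Finset.range n, b k * (R * x) ^ k)| := by
              calc _ ≤ |-(∑ k ∈ Finset.range (2 * n + 1), a k * (R * x) ^ k)| +
                    |R ^ (n + 1) * y * (∑ k ∈ Finset.range n, b k * (R * x) ^ k)| :=
                  abs_sub _ _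
                _ = _ := by rw [abs_neg]
          _ ≤ A * R ^ (2 * n) + R ^ (n + 1) * 1 * (B * R ^ (n - 1)) := by
              apply add_le_add
              · simpa using ha'
              · rw [abs_mul, abs_mul, abs_pow, abs_of_pos hR0]
                apply mul_le_mul
                · exact mul_le_mul_of_nonneg_left hy (pow_nonneg hR0.le _)
                · exact hb'
                · exact abs_nonneg _
                · positivity
          _ = C * R ^ (2 * n) := by
              rw [mul_one, mul_comm B (R ^ (n - 1)), ← mul_assoc, hpow, hCdef]
              ring
      have hRpow : (0:ℝ) < R ^ (2 * n + 1) := pow_pos hR0 _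
      have hkey : (R ^ (2 * n + 1))⁻¹ *
          |-(∑ k ∈ Finset.range (2 * n + 1), a k * (R * x) ^ k) -
            R ^ (n + 1) * y * (∑ k ∈ Finset.range n, b k * (R * x) ^ k)| ≤ C / R := by
        have h1 : (R ^ (2 * n + 1))⁻¹ * (C * R ^ (2 * n)) = C / R := by
          rw [pow_succ]
          field_simp
        calc (R ^ (2 * n + 1))⁻¹ * _ ≤ (R ^ (2 * n + 1))⁻¹ * (C * R ^ (2 * n)) :=
              mul_le_mul_of_nonneg_left hbound (inv_nonneg.mpr hRpow.le)
          _ = C / R := h1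
      have hfin : C / R < δ := by
        rw [div_lt_iff₀ hR0]
        have h2 : C / δ + 1 ≤ R := le_trans (le_max_right _ _) hR
        have h3 : δ * (C / δ + 1) = C + δ := by
          field_simp
        nlinarith [mul_le_mul_of_nonneg_left h2 hδ.le]
      exact lt_of_le_of_lt hkey hfin
end

section
/- The set of points (x₁, x₂) ∈ ℝ² satisfying the three equations (x₁² − x₂) − x₁(x₁³(x₁² − x₂) + (1/3)x₁³x₂) = 0, (1/3)x₁³ − 2x₂(x₁³(x₁² − x₂) + (1/3)x₁³x₂) = 0, and x₁⁴ + 2x₂² = 1 is exactly the four-element set { ( ±((15 + 3√3)/22)^{1/4}, √((7 − 3√3)/44) ), ( ±((15 − 3√3)/22)^{1/4}, √((7 + 3√3)/44) ) }. -/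
private lemma eq_of_sq_eq' {u v : ℝ} (hu : 0 ≤ u) (hv : 0 ≤ v) (h : u ^ 2 = v ^ 2) :
    u = v := by
  rw [← Real.sqrt_sq hu, h, Real.sqrt_sq hv]

private lemma rpow_quarter_sq {c : ℝ} (hc : 0 ≤ c) :
    (c ^ ((1 : ℝ) / 4)) ^ 2 = Real.sqrt c := by
  rw [← Real.rpow_natCast (c ^ ((1 : ℝ) / 4)) 2, ← Real.rpow_mul hc, Real.sqrt_eq_rpow]
  norm_num

private lemma sat (c d p1 : ℝ) (hc : 0 ≤ c) (hd : 0 ≤ d)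
    (hcd : c + 2 * d = 1) (hI2 : 36 * d * c = (1 + 4 * d) ^ 2)
    (hp2 : p1 ^ 2 = Real.sqrt c) :
    (p1 ^ 2 - Real.sqrt d) -
        p1 * (p1 ^ 3 * (p1 ^ 2 - Real.sqrt d) + (1 / 3) * p1 ^ 3 * Real.sqrt d) = 0 ∧
      (1 / 3) * p1 ^ 3 -
        2 * Real.sqrt d * (p1 ^ 3 * (p1 ^ 2 - Real.sqrt d) + (1 / 3) * p1 ^ 3 * Real.sqrt d) = 0 ∧
      p1 ^ 4 + 2 * Real.sqrt d ^ 2 = 1 := by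
  set s := Real.sqrt c with hs_def
  set t := Real.sqrt d with ht_def
  have hs0 : 0 ≤ s := Real.sqrt_nonneg c
  have ht0 : 0 ≤ t := Real.sqrt_nonneg d
  have hs2 : s ^ 2 = c := Real.sq_sqrt hc
  have ht2 : t ^ 2 = d := Real.sq_sqrt hd
  have h6 : 6 * t * s = 1 + 4 * t ^ 2 := by
    apply eq_of_sq_eq' (by positivity) (by positivity)
    linear_combination 36 * t ^ 2 * hs2 + (36 * c - 8 - 16 * d - 16 * t ^ 2) * ht2 + hI2
  have h1' : s ^ 2 + 2 * t ^ 2 = 1 := by linear_combination hs2 + 2 * ht2 + hcd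
  have key1 : (s - t) - s ^ 2 * (s - t) - (1 / 3) * s ^ 2 * t = 0 := by
    linear_combination (t / 3) * h6 + (-s + (2 / 3) * t) * h1'
  have key2 : (1 : ℝ) / 3 - 2 * t * s + (4 / 3) * t ^ 2 = 0 := by
    linear_combination (-1 / 3 : ℝ) * h6
  refine ⟨?_, ?_, ?_⟩
  · linear_combination
      (1 - p1 ^ 4 - p1 ^ 2 * s - s ^ 2 + (2 * t / 3) * (p1 ^ 2 + s)) * hp2 + key1
  · linear_combination p1 ^ 3 * key2 - 2 * t * p1 ^ 3 * hp2
  · linear_combination (p1 ^ 2 + s) * hp2 + hs2 + 2 * ht2 + hcd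

/-- The equilibria at infinity of the Keyfitz–Kranzer system: the solution set
of the three equations characterizing equilibria on the horizon
`{x₁⁴ + 2x₂² = 1}` of the desingularized vector field is exactly the four
points `(±((15±3√3)/22)^{1/4}, √((7∓3√3)/44))`. -/
theorem keyfitzKranzer_equilibria_at_infinity :
    {x : ℝ × ℝ |
        (x.1 ^ 2 - x.2) -
          x.1 * (x.1 ^ 3 * (x.1 ^ 2 - x.2) + (1 / 3) * x.1 ^ 3 * x.2) = 0 ∧
        (1 / 3) * x.1 ^ 3 -
          2 * x.2 * (x.1 ^ 3 * (x.1 ^ 2 - x.2) + (1 / 3) * x.1 ^ 3 * x.2) = 0 ∧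
        x.1 ^ 4 + 2 * x.2 ^ 2 = 1} =
      {(((15 + 3 * Real.sqrt 3) / 22) ^ ((1 : ℝ) / 4),
          Real.sqrt ((7 - 3 * Real.sqrt 3) / 44)),
        (-(((15 + 3 * Real.sqrt 3) / 22) ^ ((1 : ℝ) / 4)),
          Real.sqrt ((7 - 3 * Real.sqrt 3) / 44)),
        (((15 - 3 * Real.sqrt 3) / 22) ^ ((1 : ℝ) / 4),
          Real.sqrt ((7 + 3 * Real.sqrt 3) / 44)),
        (-(((15 - 3 * Real.sqrt 3) / 22) ^ ((1 : ℝ) / 4)),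
          Real.sqrt ((7 + 3 * Real.sqrt 3) / 44))} := by
  have ha2 : Real.sqrt 3 ^ 2 = 3 := Real.sq_sqrt (by norm_num)
  have ha0 : (0 : ℝ) ≤ Real.sqrt 3 := Real.sqrt_nonneg 3
  have hcP0 : (0 : ℝ) ≤ (15 + 3 * Real.sqrt 3) / 22 := by positivity
  have hcM0 : (0 : ℝ) ≤ (15 - 3 * Real.sqrt 3) / 22 := by nlinarith
  have hdM0 : (0 : ℝ) ≤ (7 - 3 * Real.sqrt 3) / 44 := by nlinarith
  have hdP0 : (0 : ℝ) ≤ (7 + 3 * Real.sqrt 3) / 44 := by positivity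
  have hcdP : (15 + 3 * Real.sqrt 3) / 22 + 2 * ((7 - 3 * Real.sqrt 3) / 44) = 1 := by ring
  have hcdM : (15 - 3 * Real.sqrt 3) / 22 + 2 * ((7 + 3 * Real.sqrt 3) / 44) = 1 := by ring
  have hI2P : 36 * ((7 - 3 * Real.sqrt 3) / 44) * ((15 + 3 * Real.sqrt 3) / 22)
      = (1 + 4 * ((7 - 3 * Real.sqrt 3) / 44)) ^ 2 := by
    linear_combination (-99 / 242 : ℝ) * ha2
  have hI2M : 36 * ((7 + 3 * Real.sqrt 3) / 44) * ((15 - 3 * Real.sqrt 3) / 22)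
      = (1 + 4 * ((7 + 3 * Real.sqrt 3) / 44)) ^ 2 := by
    linear_combination (-99 / 242 : ℝ) * ha2
  ext ⟨x1, x2⟩
  simp only [Set.mem_setOf_eq, Set.mem_insert_iff, Set.mem_singleton_iff, Prod.mk.injEq]
  constructor
  · rintro ⟨h1, h2, h3⟩
    have hx1 : x1 ≠ 0 := by
      rintro rfl
      norm_num at h1
      rw [h1] at h3
      norm_num at h3
    have hF : (1 : ℝ) / 3 - 2 * x2 * x1 ^ 2 + (4 / 3) * x2 ^ 2 = 0 := by
      rcases mul_eq_zero.mp
          (show x1 ^ 3 * ((1 : ℝ) / 3 - 2 * x2 * x1 ^ 2 + (4 / 3) * x2 ^ 2) = 0 by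
            linear_combination h2) with h | h
      · exact absurd (pow_eq_zero_iff (by norm_num) |>.mp h) hx1
      · exact h
    have ht0 : 0 < x2 := by
      by_contra hle
      push_neg at hle
      nlinarith [mul_nonneg (neg_nonneg.mpr hle) (sq_nonneg x1), sq_nonneg x2]
    have h6 : 6 * x2 * x1 ^ 2 = 1 + 4 * x2 ^ 2 := by linarith
    have hq : 88 * x2 ^ 4 - 28 * x2 ^ 2 + 1 = 0 := by
      linear_combination (-(6 * x2 * x1 ^ 2 + 1 + 4 * x2 ^ 2)) * h6 + 36 * x2 ^ 2 * h3
    have hfac : (x2 ^ 2 - (7 - 3 * Real.sqrt 3) / 44) * (x2 ^ 2 - (7 + 3 * Real.sqrt 3) / 44)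
        = 0 := by
      linear_combination (1 / 88 : ℝ) * hq - (9 / 1936 : ℝ) * ha2
    rcases mul_eq_zero.mp hfac with hd2 | hd2
    · have ht2 : x2 ^ 2 = (7 - 3 * Real.sqrt 3) / 44 := sub_eq_zero.mp hd2
      have hx2 : x2 = Real.sqrt ((7 - 3 * Real.sqrt 3) / 44) := by
        rw [← Real.sqrt_sq ht0.le, ht2]
      have hc4 : x1 ^ 4 = (15 + 3 * Real.sqrt 3) / 22 := by
        linear_combination h3 - 2 * ht2
      have hs : x1 ^ 2 = Real.sqrt ((15 + 3 * Real.sqrt 3) / 22) := by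
        rw [← hc4, show x1 ^ 4 = (x1 ^ 2) ^ 2 by ring, Real.sqrt_sq (sq_nonneg x1)]
      have hsq : x1 ^ 2 = ((((15 + 3 * Real.sqrt 3) / 22)) ^ ((1 : ℝ) / 4)) ^ 2 := by
        rw [rpow_quarter_sq hcP0]; exact hs
      rcases mul_eq_zero.mp
          (show (x1 - ((15 + 3 * Real.sqrt 3) / 22) ^ ((1 : ℝ) / 4)) *
              (x1 + ((15 + 3 * Real.sqrt 3) / 22) ^ ((1 : ℝ) / 4)) = 0 by
            linear_combination hsq) with h | h
      · exact Or.inl ⟨sub_eq_zero.mp h, hx2⟩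
      · exact Or.inr (Or.inl ⟨eq_neg_of_add_eq_zero_left h, hx2⟩)
    · have ht2 : x2 ^ 2 = (7 + 3 * Real.sqrt 3) / 44 := sub_eq_zero.mp hd2
      have hx2 : x2 = Real.sqrt ((7 + 3 * Real.sqrt 3) / 44) := by
        rw [← Real.sqrt_sq ht0.le, ht2]
      have hc4 : x1 ^ 4 = (15 - 3 * Real.sqrt 3) / 22 := by
        linear_combination h3 - 2 * ht2
      have hs : x1 ^ 2 = Real.sqrt ((15 - 3 * Real.sqrt 3) / 22) := by
        rw [← hc4, show x1 ^ 4 = (x1 ^ 2) ^ 2 by ring, Real.sqrt_sq (sq_nonneg x1)]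
      have hsq : x1 ^ 2 = ((((15 - 3 * Real.sqrt 3) / 22)) ^ ((1 : ℝ) / 4)) ^ 2 := by
        rw [rpow_quarter_sq hcM0]; exact hs
      rcases mul_eq_zero.mp
          (show (x1 - ((15 - 3 * Real.sqrt 3) / 22) ^ ((1 : ℝ) / 4)) *
              (x1 + ((15 - 3 * Real.sqrt 3) / 22) ^ ((1 : ℝ) / 4)) = 0 by
            linear_combination hsq) with h | h
      · exact Or.inr (Or.inr (Or.inl ⟨sub_eq_zero.mp h, hx2⟩))
      · exact Or.inr (Or.inr (Or.inr ⟨eq_neg_of_add_eq_zero_left h, hx2⟩))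
  · rintro (⟨rfl, rfl⟩ | ⟨rfl, rfl⟩ | ⟨rfl, rfl⟩ | ⟨rfl, rfl⟩)
    · exact sat _ _ _ hcP0 hdM0 hcdP hI2P (rpow_quarter_sq hcP0)
    · exact sat _ _ _ hcP0 hdM0 hcdP hI2P (by rw [neg_pow]; simpa using rpow_quarter_sq hcP0)
    · exact sat _ _ _ hcM0 hdP0 hcdM hI2M (rpow_quarter_sq hcM0)
    · exact sat _ _ _ hcM0 hdP0 hcdM hI2M (by rw [neg_pow]; simpa using rpow_quarter_sq hcM0)
end
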